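/- arXiv:1612.08237 — 5 statements merged into one kernel-verified Lean document; each statement's English description precedes it below -/
import Mathlib

section
/- Let s ∈ (0,1) and let Ω ⊆ ℝ^n be an open set such that P_s(Ω) < ∞ (the s-perimeter of Ω in all of ℝ^n). Then for every measurable set E₀ ⊆ ℝ^n there exists a measurable set E ⊆ ℝ^n that is s-minimal in Ω and satisfies |(E∖Ω) Δ (E₀∖Ω)| = 0. -/
open MeasureTheory Set Filter Topology Metric Bornology
open scoped ENNReal NNReal symmDiff

noncomputable def Ls (n : ℕ) (s : ℝ) (A B : Set (EuclideanSpace ℝ (Fin n))) : ℝ≥0∞ :=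
  ∫⁻ x in A, ∫⁻ y in B, ENNReal.ofReal (dist x y ^ (-((n : ℝ) + s)))

noncomputable def Ps (n : ℕ) (s : ℝ) (E Ω : Set (EuclideanSpace ℝ (Fin n))) : ℝ≥0∞ :=
  Ls n s (E ∩ Ω) (Eᶜ ∩ Ω) + Ls n s (E ∩ Ω) (Eᶜ \ Ω) + Ls n s (E \ Ω) (Eᶜ ∩ Ω)

def SMinimal (n : ℕ) (s : ℝ) (E Ω : Set (EuclideanSpace ℝ (Fin n))) : Prop :=
  Ps n s E Ω < ⊤ ∧ ∀ F : Set (EuclideanSpace ℝ (Fin n)), MeasurableSet F →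
    volume ((F \ Ω) ∆ (E \ Ω)) = 0 → Ps n s E Ω ≤ Ps n s F Ω

namespace SMinAux

variable {n : ℕ} {s : ℝ}

abbrev Pt (n : ℕ) := EuclideanSpace ℝ (Fin n)

noncomputable def K (n : ℕ) (s : ℝ) : Pt n × Pt n → ℝ≥0∞ :=
  fun p => ENNReal.ofReal (dist p.1 p.2 ^ (-((n : ℝ) + s)))

lemma measurable_K : Measurable (K n s) :=
  ENNReal.measurable_ofReal.comp ((measurable_fst.dist measurable_snd).pow measurable_const)

def Q (Ω E : Set (Pt n)) : Set (Pt n × Pt n) :=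
  ((E ∩ Ω) ×ˢ (Eᶜ ∩ Ω)) ∪ ((E ∩ Ω) ×ˢ (Eᶜ \ Ω)) ∪ ((E \ Ω) ×ˢ (Eᶜ ∩ Ω))

lemma mem_Q {Ω E : Set (Pt n)} {p : Pt n × Pt n} :
    p ∈ Q Ω E ↔ p.1 ∈ E ∧ p.2 ∉ E ∧ (p.1 ∈ Ω ∨ p.2 ∈ Ω) := by
  simp only [Q, Set.mem_union, Set.mem_prod, Set.mem_inter_iff, Set.mem_diff, Set.mem_compl_iff]
  tauto

lemma measurableSet_Q {Ω E : Set (Pt n)} (hΩ : MeasurableSet Ω) (hE : MeasurableSet E) :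
    MeasurableSet (Q Ω E) :=
  (((hE.inter hΩ).prod (hE.compl.inter hΩ)).union
    ((hE.inter hΩ).prod (hE.compl.diff hΩ))).union ((hE.diff hΩ).prod (hE.compl.inter hΩ))

lemma Ls_eq (A B : Set (Pt n)) :
    Ls n s A B = ∫⁻ p in A ×ˢ B, K n s p ∂((volume : Measure (Pt n)).prod volume) := by
  rw [Ls, ← Measure.prod_restrict, lintegral_prod _ measurable_K.aemeasurable]
  rfl

lemma Ps_eq {Ω E : Set (Pt n)} (hΩ : MeasurableSet Ω) (hE : MeasurableSet E) :
    Ps n s E Ω = ∫⁻ p, (Q Ω E).indicator (K n s) p ∂((volume : Measure (Pt n)).prod volume) := by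
  rw [lintegral_indicator (measurableSet_Q hΩ hE)]
  rw [Ps, Ls_eq, Ls_eq, Ls_eq, Q]
  rw [lintegral_union ((hE.diff hΩ).prod (hE.compl.inter hΩ)) ?d1,
      lintegral_union ((hE.inter hΩ).prod (hE.compl.diff hΩ)) ?d2]
  case d1 =>
    rw [Set.disjoint_left]
    rintro ⟨x, y⟩ (⟨⟨_, hx⟩, _⟩ | ⟨⟨_, hx⟩, _⟩) ⟨⟨_, hx'⟩, _⟩ <;> exact hx' hx
  case d2 =>
    rw [Set.disjoint_left]
    rintro ⟨x, y⟩ ⟨_, _, hy⟩ ⟨_, _, hy'⟩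
    exact hy' hy

lemma submod {Ω E F : Set (Pt n)} (hΩ : MeasurableSet Ω) (hE : MeasurableSet E)
    (hF : MeasurableSet F) :
    Ps n s (E ∩ F) Ω + Ps n s (E ∪ F) Ω ≤ Ps n s E Ω + Ps n s F Ω := by
  rw [Ps_eq hΩ (hE.inter hF), Ps_eq hΩ (hE.union hF), Ps_eq hΩ hE, Ps_eq hΩ hF,
    ← lintegral_add_left (measurable_K.indicator (measurableSet_Q hΩ (hE.inter hF))),
    ← lintegral_add_left (measurable_K.indicator (measurableSet_Q hΩ hE))]
  refine lintegral_mono fun p => ?_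
  simp only [Set.indicator_apply]
  by_cases hw : p.1 ∈ Ω ∨ p.2 ∈ Ω
  · by_cases h1 : p.1 ∈ E <;> by_cases h2 : p.2 ∈ E <;> by_cases h3 : p.1 ∈ F <;>
      by_cases h4 : p.2 ∈ F <;>
      simp [mem_Q, h1, h2, h3, h4, hw] <;> rw [if_pos hw] <;> simp [add_comm, le_add_self]
  · simp [mem_Q, hw]

lemma Ps_congr {Ω E F : Set (Pt n)} (hΩ : MeasurableSet Ω) (hE : MeasurableSet E)
    (hF : MeasurableSet F) (h : volume (E ∆ F) = 0) : Ps n s E Ω = Ps n s F Ω := by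
  rw [Ps_eq hΩ hE, Ps_eq hΩ hF]
  refine lintegral_congr_ae ?_
  set N := toMeasurable volume (E ∆ F) with hN
  have hNm : MeasurableSet N := measurableSet_toMeasurable _ _
  have hN0 : volume N = 0 := by rw [hN, measure_toMeasurable]; exact h
  have hbig : ((volume : Measure (Pt n)).prod volume) (N ×ˢ univ ∪ univ ×ˢ N) = 0 := by
    refine measure_union_null ?_ ?_
    · rw [Measure.prod_prod, hN0, zero_mul]
    · rw [Measure.prod_prod, hN0, mul_zero]
  have hae : ∀ᵐ p ∂((volume : Measure (Pt n)).prod volume), p ∉ N ×ˢ univ ∪ univ ×ˢ N :=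
    measure_eq_zero_iff_ae_notMem.mp hbig
  filter_upwards [hae] with p hp
  have h1 : p.1 ∈ E ↔ p.1 ∈ F := by
    by_contra hc
    exact hp (Or.inl ⟨subset_toMeasurable _ _ (by simp [Set.mem_symmDiff]; tauto), trivial⟩)
  have h2 : p.2 ∈ E ↔ p.2 ∈ F := by
    by_contra hc
    exact hp (Or.inr ⟨trivial, subset_toMeasurable _ _ (by simp [Set.mem_symmDiff]; tauto)⟩)
  have hQ : p ∈ Q Ω E ↔ p ∈ Q Ω F := by rw [mem_Q, mem_Q, h1, h2]
  by_cases hmem : p ∈ Q Ω E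
  · rw [Set.indicator_of_mem hmem, Set.indicator_of_mem (hQ.mp hmem)]
  · rw [Set.indicator_of_notMem hmem, Set.indicator_of_notMem (fun h => hmem (hQ.mpr h))]

lemma fatou {Ω : Set (Pt n)} (hΩ : MeasurableSet Ω) (Ek : ℕ → Set (Pt n))
    (hk : ∀ k, MeasurableSet (Ek k)) (L : Set (Pt n)) (hL : MeasurableSet L)
    (hconv : ∀ x, ∀ᶠ k in atTop, (x ∈ Ek k ↔ x ∈ L)) :
    Ps n s L Ω ≤ liminf (fun k => Ps n s (Ek k) Ω) atTop := by
  have key : Ps n s L Ω =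
      ∫⁻ p, liminf (fun k => (Q Ω (Ek k)).indicator (K n s) p) atTop
        ∂((volume : Measure (Pt n)).prod volume) := by
    rw [Ps_eq hΩ hL]
    refine lintegral_congr fun p => ?_
    have hev : ∀ᶠ k in atTop,
        (Q Ω (Ek k)).indicator (K n s) p = (Q Ω L).indicator (K n s) p := by
      filter_upwards [hconv p.1, hconv p.2] with k h1 h2
      have hQ : p ∈ Q Ω (Ek k) ↔ p ∈ Q Ω L := by rw [mem_Q, mem_Q, h1, h2]
      by_cases hmem : p ∈ Q Ω (Ek k)
      · rw [Set.indicator_of_mem hmem, Set.indicator_of_mem (hQ.mp hmem)]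
      · rw [Set.indicator_of_notMem hmem,
          Set.indicator_of_notMem (fun h => hmem (hQ.mpr h))]
    rw [Filter.liminf_congr hev, Filter.liminf_const]
  rw [key]
  refine le_trans (lintegral_liminf_le fun k =>
    measurable_K.indicator (measurableSet_Q hΩ (hk k))) ?_
  refine liminf_le_liminf (Filter.Eventually.of_forall fun k => ?_)
  rw [Ps_eq hΩ (hk k)]

lemma Ls_empty_right (A : Set (Pt n)) : Ls n s A ∅ = 0 := by simp [Ls]

lemma Ls_empty_left (B : Set (Pt n)) : Ls n s ∅ B = 0 := by simp [Ls]

lemma Ls_mono_right {A B B' : Set (Pt n)} (h : B ⊆ B') : Ls n s A B ≤ Ls n s A B' :=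
  lintegral_mono fun _ => lintegral_mono' (Measure.restrict_mono h le_rfl) le_rfl

end SMinAux

open SMinAux in
/-- Corollary 1.9: if `Ω` is an open set with finite global `s`-perimeter,
then for every exterior data there exists an `s`-minimal set in `Ω`. -/
theorem exists_sMinimal_of_finite_perimeter_domain
    (n : ℕ) (hn : 1 ≤ n) (s : ℝ) (hs : s ∈ Set.Ioo (0 : ℝ) 1)
    (Ω : Set (EuclideanSpace ℝ (Fin n))) (hΩ : IsOpen Ω)
    (hΩper : Ps n s Ω Set.univ < ⊤)
    (E₀ : Set (EuclideanSpace ℝ (Fin n))) (hE₀ : MeasurableSet E₀) :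
    ∃ E : Set (EuclideanSpace ℝ (Fin n)), MeasurableSet E ∧
      SMinimal n s E Ω ∧ volume ((E \ Ω) ∆ (E₀ \ Ω)) = 0 := by
  classical
  have hΩm : MeasurableSet Ω := hΩ.measurableSet
  set X : Set (Pt n) := E₀ \ Ω with hXdef
  have hXm : MeasurableSet X := hE₀.diff hΩm
  have hXnΩ : ∀ x ∈ X, x ∉ Ω := fun x hx => hx.2
  set m : ℝ≥0∞ := ⨅ F : {F : Set (Pt n) // MeasurableSet F ∧ F \ Ω = X}, Ps n s F.1 Ω with hmdef
  have hm_le : ∀ F : Set (Pt n), MeasurableSet F → F \ Ω = X → m ≤ Ps n s F Ω :=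
    fun F h1 h2 => iInf_le _ (⟨F, h1, h2⟩ : {F : Set (Pt n) // MeasurableSet F ∧ F \ Ω = X})
  have hLs : Ls n s Ω Ωᶜ < ⊤ := by
    have h0 := hΩper
    rw [Ps] at h0
    simp only [Set.inter_univ, Set.diff_univ, Ls_empty_right, Ls_empty_left, add_zero] at h0
    exact h0
  have hUX : (Ω ∪ X) \ Ω = X := by
    rw [Set.union_diff_left]
    ext x; exact ⟨fun h => h.1, fun h => ⟨h, hXnΩ x h⟩⟩
  have hfin : Ps n s (Ω ∪ X) Ω < ⊤ := by
    have e1 : (Ω ∪ X) ∩ Ω = Ω := Set.inter_eq_self_of_subset_right Set.subset_union_left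
    have e2 : (Ω ∪ X)ᶜ ∩ Ω = ∅ := by
      ext x; simp only [Set.mem_inter_iff, Set.mem_compl_iff, Set.mem_union, Set.mem_empty_iff_false]
      tauto
    calc Ps n s (Ω ∪ X) Ω = Ls n s Ω ((Ω ∪ X)ᶜ \ Ω) := by
          rw [Ps, hUX, e1, e2, Ls_empty_right, Ls_empty_right, zero_add, add_zero]
      _ ≤ Ls n s Ω Ωᶜ := Ls_mono_right (fun x hx => hx.2)
      _ < ⊤ := hLs
  have hm_lt : m < ⊤ := (hm_le _ (hΩm.union hXm) hUX).trans_lt hfin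
  -- minimizing sequence
  have hex : ∀ k : ℕ, ∃ F : {F : Set (Pt n) // MeasurableSet F ∧ F \ Ω = X},
      Ps n s F.1 Ω ≤ m + 2⁻¹ ^ k := by
    intro k
    have hlt : m < m + 2⁻¹ ^ k :=
      ENNReal.lt_add_right hm_lt.ne (ENNReal.pow_pos (by norm_num) k).ne'
    obtain ⟨F, hF⟩ := iInf_lt_iff.mp hlt
    exact ⟨F, hF.le⟩
  choose F hF using hex
  set G : ℕ → Set (Pt n) := fun k => (F k).1 with hGdef
  have hGm : ∀ k, MeasurableSet (G k) := fun k => (F k).2.1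
  have hGX : ∀ k, G k \ Ω = X := fun k => (F k).2.2
  have hGle : ∀ k, Ps n s (G k) Ω ≤ m + 2⁻¹ ^ k := hF
  set D : ℕ → ℕ → Set (Pt n) :=
    fun j => Nat.rec (G j) (fun k Dk => Dk ∩ G (j + k + 1)) with hDdef
  have hD0 : ∀ j, D j 0 = G j := fun _ => rfl
  have hDs : ∀ j k, D j (k + 1) = D j k ∩ G (j + k + 1) := fun _ _ => rfl
  have hDm : ∀ j k, MeasurableSet (D j k) := by
    intro j k
    induction k with
    | zero => exact hGm j
    | succ k ih => rw [hDs]; exact ih.inter (hGm _)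
  have hDX : ∀ j k, D j k \ Ω = X := by
    intro j k
    induction k with
    | zero => exact hGX j
    | succ k ih =>
      rw [hDs]
      have : (D j k ∩ G (j + k + 1)) \ Ω = (D j k \ Ω) ∩ (G (j + k + 1) \ Ω) := by
        ext x
        simp only [Set.mem_diff, Set.mem_inter_iff]
        tauto
      rw [this, ih, hGX, Set.inter_self]
  have memD : ∀ j k x, x ∈ D j k ↔ ∀ i, i ≤ k → x ∈ G (j + i) := by
    intro j k
    induction k with
    | zero =>
      intro x
      rw [hD0]
      constructor
      · intro hx i hi
        have : i = 0 := Nat.le_zero.mp hi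
        subst this
        simpa using hx
      · intro h; simpa using h 0 le_rfl
    | succ k ih =>
      intro x
      rw [hDs j k, Set.mem_inter_iff, ih]
      constructor
      · rintro ⟨h1, h2⟩ i hi
        by_cases hik : i ≤ k
        · exact h1 i hik
        · have : i = k + 1 := by omega
          subst this
          exact h2
      · intro h
        exact ⟨fun i hi => h i (hi.trans (Nat.le_succ k)), h (k + 1) le_rfl⟩
  have hDle : ∀ j k, Ps n s (D j k) Ω ≤ m + ∑ i ∈ Finset.range (k + 1), 2⁻¹ ^ (j + i) := by
    intro j k
    induction k with
    | zero => rw [hD0]; simpa using hGle j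
    | succ k ih =>
      have hsub := submod (n := n) (s := s) hΩm (hDm j k) (hGm (j + k + 1))
      have hunX : (D j k ∪ G (j + k + 1)) \ Ω = X := by
        rw [Set.union_diff_distrib, hDX, hGX, Set.union_self]
      have hun : m ≤ Ps n s (D j k ∪ G (j + k + 1)) Ω :=
        hm_le _ ((hDm j k).union (hGm _)) hunX
      have h2 : Ps n s (D j (k + 1)) Ω + m ≤
          (m + ∑ i ∈ Finset.range (k + 2), 2⁻¹ ^ (j + i)) + m := by
        calc Ps n s (D j (k + 1)) Ω + m
            ≤ Ps n s (D j k ∩ G (j + k + 1)) Ω + Ps n s (D j k ∪ G (j + k + 1)) Ω := by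
              rw [hDs]; exact add_le_add le_rfl hun
          _ ≤ Ps n s (D j k) Ω + Ps n s (G (j + k + 1)) Ω := hsub
          _ ≤ (m + ∑ i ∈ Finset.range (k + 1), 2⁻¹ ^ (j + i)) + (m + 2⁻¹ ^ (j + k + 1)) :=
              add_le_add ih (hGle _)
          _ = (m + ∑ i ∈ Finset.range (k + 2), 2⁻¹ ^ (j + i)) + m := by
              conv_rhs => rw [Finset.sum_range_succ]
              have h5 : j + (k + 1) = j + k + 1 := by omega
              rw [h5]
              ring
      exact (ENNReal.add_le_add_iff_right hm_lt.ne).mp h2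
  have hgeom : ∀ j k, (∑ i ∈ Finset.range (k + 1), (2⁻¹ : ℝ≥0∞) ^ (j + i)) ≤ 2⁻¹ ^ j * 2 := by
    intro j k
    have h1 : ∑ i ∈ Finset.range (k + 1), (2⁻¹ : ℝ≥0∞) ^ (j + i)
        = 2⁻¹ ^ j * ∑ i ∈ Finset.range (k + 1), (2⁻¹ : ℝ≥0∞) ^ i := by
      rw [Finset.mul_sum]
      exact Finset.sum_congr rfl fun i _ => by rw [pow_add]
    rw [h1]
    refine mul_le_mul_right ?_ _
    refine (ENNReal.sum_le_tsum _).trans ?_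
    rw [ENNReal.tsum_geometric]
    norm_num
  have hDle2 : ∀ j k, Ps n s (D j k) Ω ≤ m + 2⁻¹ ^ j * 2 :=
    fun j k => (hDle j k).trans (add_le_add le_rfl (hgeom j k))
  set H : ℕ → Set (Pt n) := fun j => ⋂ i, G (j + i) with hHdef
  have memH : ∀ j x, x ∈ H j ↔ ∀ i, x ∈ G (j + i) := fun j x => Set.mem_iInter
  have hHm : ∀ j, MeasurableSet (H j) := fun j => MeasurableSet.iInter fun i => hGm _
  have hHX : ∀ j, H j \ Ω = X := by
    intro j
    ext x
    constructor
    · rintro ⟨hx, hxo⟩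
      have hx0 : x ∈ G (j + 0) := (memH j x).mp hx 0
      rw [← hGX (j + 0)]
      exact ⟨hx0, hxo⟩
    · intro hxX
      refine ⟨(memH j x).mpr fun i => ?_, hXnΩ x hxX⟩
      rw [← hGX (j + i)] at hxX
      exact hxX.1
  have hHconv : ∀ j x, ∀ᶠ k in atTop, (x ∈ D j k ↔ x ∈ H j) := by
    intro j x
    by_cases hx : x ∈ H j
    · refine Filter.Eventually.of_forall fun k => ?_
      simp only [hx, iff_true]
      exact (memD j k x).mpr fun i _ => (memH j x).mp hx i
    · obtain ⟨i, hi⟩ : ∃ i, x ∉ G (j + i) := by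
        by_contra hc
        push_neg at hc
        exact hx ((memH j x).mpr hc)
      refine Filter.eventually_atTop.mpr ⟨i, fun k hk => ?_⟩
      simp only [hx, iff_false]
      exact fun hc => hi ((memD j k x).mp hc i hk)
  have hHle : ∀ j, Ps n s (H j) Ω ≤ m + 2⁻¹ ^ j * 2 := by
    intro j
    refine (fatou hΩm (fun k => D j k) (hDm j) (H j) (hHm j) (hHconv j)).trans ?_
    calc liminf (fun k => Ps n s (D j k) Ω) atTop
        ≤ liminf (fun _ => m + 2⁻¹ ^ j * 2) atTop :=
          liminf_le_liminf (Filter.Eventually.of_forall fun k => hDle2 j k)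
      _ = m + 2⁻¹ ^ j * 2 := liminf_const _
  set E : Set (Pt n) := ⋃ j, H j with hEdef
  have hEm : MeasurableSet E := MeasurableSet.iUnion hHm
  have hEX : E \ Ω = X := by
    ext x
    constructor
    · rintro ⟨hx, hxo⟩
      obtain ⟨j, hj⟩ := Set.mem_iUnion.mp hx
      rw [← hHX j]
      exact ⟨hj, hxo⟩
    · intro hxX
      rw [← hHX 0] at hxX
      exact ⟨Set.mem_iUnion.mpr ⟨0, hxX.1⟩, hxX.2⟩
  have hHmono : ∀ j j', j ≤ j' → ∀ x, x ∈ H j → x ∈ H j' := by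
    intro j j' hjj x hx
    refine (memH j' x).mpr fun i => ?_
    have := (memH j x).mp hx (j' - j + i)
    rwa [show j + (j' - j + i) = j' + i by omega] at this
  have hEconv : ∀ x, ∀ᶠ j in atTop, (x ∈ H j ↔ x ∈ E) := by
    intro x
    by_cases hx : x ∈ E
    · obtain ⟨j0, hj0⟩ := Set.mem_iUnion.mp hx
      refine Filter.eventually_atTop.mpr ⟨j0, fun j hj => ?_⟩
      simp only [hx, iff_true]
      exact hHmono j0 j hj x hj0
    · refine Filter.Eventually.of_forall fun j => ?_
      simp only [hx, iff_false]
      exact fun hc => hx (Set.mem_iUnion.mpr ⟨j, hc⟩)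
  have hEle : Ps n s E Ω ≤ m := by
    refine (fatou hΩm H hHm E hEm hEconv).trans ?_
    have h2 : liminf (fun j => Ps n s (H j) Ω) atTop
        ≤ liminf (fun j : ℕ => m + 2⁻¹ ^ j * 2) atTop :=
      liminf_le_liminf (Filter.Eventually.of_forall hHle)
    have h3 : Tendsto (fun j : ℕ => m + (2⁻¹ : ℝ≥0∞) ^ j * 2) atTop (𝓝 (m + 0 * 2)) := by
      refine Filter.Tendsto.const_add m ?_
      refine ENNReal.Tendsto.mul_const ?_ (Or.inr (by norm_num))
      exact ENNReal.tendsto_pow_atTop_nhds_zero_of_lt_one (by norm_num)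
    have h4 : liminf (fun j : ℕ => m + (2⁻¹ : ℝ≥0∞) ^ j * 2) atTop = m + 0 * 2 :=
      h3.liminf_eq
    rw [h4] at h2
    simpa using h2
  refine ⟨E, hEm, ⟨hEle.trans_lt hm_lt, ?_⟩, ?_⟩
  · intro Fq hFq hFnull
    rw [hEX] at hFnull
    set F' : Set (Pt n) := (Fq ∩ Ω) ∪ X with hF'def
    have hF'm : MeasurableSet F' := (hFq.inter hΩm).union hXm
    have hF'X : F' \ Ω = X := by
      ext x
      simp only [hF'def, Set.mem_diff, Set.mem_union, Set.mem_inter_iff]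
      constructor
      · rintro ⟨h1 | h1, h2⟩
        · exact absurd h1.2 h2
        · exact h1
      · intro hxX
        exact ⟨Or.inr hxX, hXnΩ x hxX⟩
    have hsub : Fq ∆ F' ⊆ (Fq \ Ω) ∆ X := by
      intro x hx
      have hXo := hXnΩ x
      simp only [Set.mem_symmDiff, hF'def, Set.mem_union, Set.mem_inter_iff,
        Set.mem_diff] at hx ⊢
      tauto
    have hnull2 : volume (Fq ∆ F') = 0 := measure_mono_null hsub hFnull
    have heq : Ps n s Fq Ω = Ps n s F' Ω := Ps_congr hΩm hFq hF'm hnull2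
    exact hEle.trans ((hm_le F' hF'm hF'X).trans_eq heq.symm)
  · rw [hEX, hXdef, symmDiff_self]
    simp
end

section
/- Let Ω ⊆ ℝ^n be a bounded open set, s ∈ (0,1), and let E ⊆ ℝ^{n+1} be measurable. Suppose that for some k ∈ ℕ one has Ω×(−∞,−k] ⊆ E ∩ Ω^∞ ⊆ Ω×(−∞,k] (up to null sets) and P_s(E, Ω^{k+1}) < ∞, where Ω^{k+1} := Ω×(−k−1,k+1). Then the local part of the s-perimeter in the infinite cylinder is finite: P_s^L(E, Ω^∞) < ∞. -/
open MeasureTheory Set Filter Topology Metric Bornology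
open scoped ENNReal NNReal symmDiff

/-- Projection of a point of `ℝ^{n+1}` onto its first `n` coordinates. -/
def projT {n : ℕ} (X : EuclideanSpace ℝ (Fin (n + 1))) : EuclideanSpace ℝ (Fin n) :=
  WithLp.toLp 2 (fun i => X (Fin.castSucc i))

/-- The last ("vertical") coordinate of a point of `ℝ^{n+1}`. -/
def lastCoord {n : ℕ} (X : EuclideanSpace ℝ (Fin (n + 1))) : ℝ := X (Fin.last n)

/-- The generalized cylinder `Ω × I ⊆ ℝ^{n+1}`. -/
def cylinder {n : ℕ} (Ω : Set (EuclideanSpace ℝ (Fin n))) (I : Set ℝ) :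
    Set (EuclideanSpace ℝ (Fin (n + 1))) :=
  {X | projT X ∈ Ω ∧ lastCoord X ∈ I}

/-- The local part of the fractional `s`-perimeter. -/
noncomputable def PsL (n : ℕ) (s : ℝ) (E Ω : Set (EuclideanSpace ℝ (Fin n))) : ℝ≥0∞ :=
  Ls n s (E ∩ Ω) (Eᶜ ∩ Ω)

/- ### Auxiliary lemmas -/

lemma Ls_mono {N : ℕ} {s : ℝ} {A A' B B' : Set (EuclideanSpace ℝ (Fin N))}
    (hA : A ≤ᵐ[volume] A') (hB : B ≤ᵐ[volume] B') : Ls N s A B ≤ Ls N s A' B' := by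
  unfold Ls
  calc ∫⁻ x in A, ∫⁻ y in B, ENNReal.ofReal (dist x y ^ (-((N : ℝ) + s)))
      ≤ ∫⁻ x in A', ∫⁻ y in B, ENNReal.ofReal (dist x y ^ (-((N : ℝ) + s))) :=
        lintegral_mono' (Measure.restrict_mono' hA le_rfl) le_rfl
    _ ≤ _ :=
        lintegral_mono fun x => lintegral_mono' (Measure.restrict_mono' hB le_rfl) le_rfl

lemma Ls_union_left {N : ℕ} {s : ℝ} (A₁ A₂ B : Set (EuclideanSpace ℝ (Fin N))) :
    Ls N s (A₁ ∪ A₂) B ≤ Ls N s A₁ B + Ls N s A₂ B :=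
  lintegral_union_le _ _ _

lemma Ls_union_right {N : ℕ} {s : ℝ} (A B₁ B₂ : Set (EuclideanSpace ℝ (Fin N))) :
    Ls N s A (B₁ ∪ B₂) ≤ Ls N s A B₁ + Ls N s A B₂ := by
  unfold Ls
  have hker : Measurable (fun z : EuclideanSpace ℝ (Fin N) × EuclideanSpace ℝ (Fin N) =>
      ENNReal.ofReal (dist z.1 z.2 ^ (-((N : ℝ) + s)))) := by fun_prop
  calc ∫⁻ x in A, ∫⁻ y in B₁ ∪ B₂, ENNReal.ofReal (dist x y ^ (-((N : ℝ) + s)))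
      ≤ ∫⁻ x in A, ((∫⁻ y in B₁, ENNReal.ofReal (dist x y ^ (-((N : ℝ) + s))))
          + ∫⁻ y in B₂, ENNReal.ofReal (dist x y ^ (-((N : ℝ) + s)))) :=
        lintegral_mono fun x => lintegral_union_le _ _ _
    _ = _ := lintegral_add_left' (hker.lintegral_prod_right').aemeasurable _

lemma lintegral_cylinder {n : ℕ} (Ω : Set (EuclideanSpace ℝ (Fin n)))
    (hΩ : MeasurableSet Ω) (I : Set ℝ)
    (h : ℝ → ℝ≥0∞) (hh : Measurable h) :
    ∫⁻ X in _root_.cylinder Ω I, h (lastCoord X) = (∫⁻ t in I, h t) * volume Ω := by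
  have e1 := EuclideanSpace.volume_preserving_symm_measurableEquiv_toLp (Fin (n+1))
  have e2 := MeasureTheory.measurePreserving_piFinSuccAbove
    (fun _ : Fin (n+1) => (volume : Measure ℝ)) (Fin.last n)
  set e := (MeasurableEquiv.toLp 2 (Fin (n+1) → ℝ)).symm.trans
    (MeasurableEquiv.piFinSuccAbove (fun _ : Fin (n+1) => ℝ) (Fin.last n)) with he
  have hmp : MeasurePreserving e volume
      ((volume : Measure ℝ).prod (volume : Measure (Fin n → ℝ))) := by
    rw [he]
    refine MeasurePreserving.comp (g := MeasurableEquiv.piFinSuccAbove (fun _ : Fin (n+1) => ℝ) (Fin.last n))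
      (f := ((MeasurableEquiv.toLp 2 (Fin (n+1) → ℝ)).symm : EuclideanSpace ℝ (Fin (n+1)) → (Fin (n+1) → ℝ))) ?_ e1
    have h1 : (volume : Measure (Fin (n+1) → ℝ)) = Measure.pi fun _ => volume := by
      rw [volume_pi]
    have h2 : (volume : Measure (Fin n → ℝ)) = Measure.pi fun _ => volume := by
      rw [volume_pi]
    rw [h1, h2]
    exact e2
  set en := (MeasurableEquiv.toLp 2 (Fin n → ℝ)).symm with hen
  set Ω' : Set (Fin n → ℝ) := en.symm ⁻¹' Ω with hΩ'
  have hproj : ∀ X : EuclideanSpace ℝ (Fin (n+1)), en.symm ((e X).2) = projT X := by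
    intro X
    ext i
    show X ((Fin.last n).succAbove i) = X i.castSucc
    rw [Fin.succAbove_last]
  have hcyl : _root_.cylinder Ω I = e ⁻¹' (I ×ˢ Ω') := by
    ext X
    simp only [_root_.cylinder, mem_setOf_eq, mem_preimage, mem_prod]
    constructor
    · rintro ⟨h1, h2⟩
      refine ⟨h2, ?_⟩
      show en.symm ((e X).2) ∈ Ω
      rw [hproj]; exact h1
    · rintro ⟨h1, h2⟩
      refine ⟨?_, h1⟩
      rw [← hproj]; exact h2
  have hΩ'v : volume Ω' = volume Ω :=
    (MeasurePreserving.symm en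
      (EuclideanSpace.volume_preserving_symm_measurableEquiv_toLp (Fin n))).measure_preimage
      hΩ.nullMeasurableSet
  calc ∫⁻ X in _root_.cylinder Ω I, h (lastCoord X)
      = ∫⁻ X in e ⁻¹' (I ×ˢ Ω'), (fun z : ℝ × (Fin n → ℝ) => h z.1) (e X) := by
        rw [hcyl]; exact lintegral_congr fun X => rfl
    _ = ∫⁻ z in I ×ˢ Ω', h z.1 ∂((volume : Measure ℝ).prod volume) := by
        exact hmp.setLIntegral_comp_preimage_emb e.measurableEmbedding (fun z => h z.1) (I ×ˢ Ω')
    _ = ∫⁻ z, h z.1 * (fun _ : Fin n → ℝ => (1:ℝ≥0∞)) z.2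
          ∂((volume.restrict I).prod (volume.restrict Ω')) := by
        rw [Measure.prod_restrict]; simp
    _ = (∫⁻ t in I, h t) * ((volume.restrict Ω') univ) := by
        rw [lintegral_prod_mul hh.aemeasurable aemeasurable_const]
        simp
    _ = (∫⁻ t in I, h t) * volume Ω := by rw [Measure.restrict_apply_univ, hΩ'v]

lemma oneDim_base {c q : ℝ} (hc : 0 < c) (hq : 1 < q) :
    ∫⁻ r in Ici c, ENNReal.ofReal (r ^ (-q)) < ⊤ := by
  have hint : IntegrableOn (fun r : ℝ => r ^ (-q)) (Ioi c) :=
    integrableOn_Ioi_rpow_of_lt (by linarith) hc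
  have h : ∫⁻ r in Ici c, ENNReal.ofReal (r ^ (-q))
      = ∫⁻ r in Ioi c, ENNReal.ofReal (r ^ (-q)) :=
    (setLIntegral_congr (Ioi_ae_eq_Ici (a := c)).symm)
  rw [h]
  exact hint.setLIntegral_lt_top

lemma oneDim_Ici {a b q : ℝ} (hab : a < b) (hq : 1 < q) :
    ∫⁻ t in Ici b, ENNReal.ofReal ((t - a) ^ (-q)) < ⊤ := by
  have hmp := measurePreserving_add_right (volume : Measure ℝ) a
  have hmeas : Measurable fun t : ℝ => ENNReal.ofReal ((t - a) ^ (-q)) := by fun_prop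
  have key := hmp.setLIntegral_comp_preimage (measurableSet_Ici (a := b)) hmeas
  have hpre : (fun x : ℝ => x + a) ⁻¹' (Ici b) = Ici (b - a) := by
    ext r; simp [le_sub_iff_add_le]
  rw [← key, hpre]
  calc ∫⁻ r in Ici (b - a), ENNReal.ofReal ((r + a - a) ^ (-q))
      = ∫⁻ r in Ici (b - a), ENNReal.ofReal (r ^ (-q)) := by
        exact lintegral_congr fun r => by ring_nf
    _ < ⊤ := oneDim_base (by linarith) hq

lemma oneDim_Iic {a b q : ℝ} (hab : a < b) (hq : 1 < q) :
    ∫⁻ u in Iic a, ENNReal.ofReal ((b - u) ^ (-q)) < ⊤ := by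
  have hmp := Measure.measurePreserving_sub_left (volume : Measure ℝ) b
  have hmeas : Measurable fun t : ℝ => ENNReal.ofReal ((b - t) ^ (-q)) := by fun_prop
  have key := hmp.setLIntegral_comp_preimage (measurableSet_Iic (a := a)) hmeas
  have hpre : (fun x : ℝ => b - x) ⁻¹' (Iic a) = Ici (b - a) := by
    ext r; simp only [mem_preimage, mem_Iic, mem_Ici]; constructor <;> intro h <;> linarith
  rw [← key, hpre]
  calc ∫⁻ r in Ici (b - a), ENNReal.ofReal ((b - (b - r)) ^ (-q))
      = ∫⁻ r in Ici (b - a), ENNReal.ofReal (r ^ (-q)) := by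
        apply lintegral_congr; intro r; norm_num
    _ < ⊤ := oneDim_base (by linarith) hq

/-- The last coordinate is 1-Lipschitz for the Euclidean distance. -/
lemma lastCoord_dist_le {n : ℕ} (x y : EuclideanSpace ℝ (Fin (n+1))) :
    lastCoord y - lastCoord x ≤ dist x y := by
  have h1 : dist (x (Fin.last n)) (y (Fin.last n)) ≤ dist x y := by
    rw [EuclideanSpace.dist_eq]
    have h2 : dist (x (Fin.last n)) (y (Fin.last n)) ^ 2
        ≤ ∑ i, dist (x i) (y i) ^ 2 :=
      Finset.single_le_sum (f := fun i => dist (x i) (y i) ^ 2)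
        (fun i _ => sq_nonneg _) (Finset.mem_univ (Fin.last n))
    calc dist (x (Fin.last n)) (y (Fin.last n))
        = Real.sqrt (dist (x (Fin.last n)) (y (Fin.last n)) ^ 2) :=
          (Real.sqrt_sq dist_nonneg).symm
      _ ≤ _ := Real.sqrt_le_sqrt h2
  have h3 : lastCoord y - lastCoord x ≤ |x (Fin.last n) - y (Fin.last n)| := by
    rw [abs_sub_comm]
    exact le_abs_self _
  calc lastCoord y - lastCoord x ≤ |x (Fin.last n) - y (Fin.last n)| := h3
    _ = dist (x (Fin.last n)) (y (Fin.last n)) := (Real.dist_eq _ _).symm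
    _ ≤ dist x y := h1

/-- Key estimate: interaction between two vertically separated parts of a bounded cylinder is
finite. -/
lemma Ls_sep {n : ℕ} (hn : 1 ≤ n) {s : ℝ} (hs : 0 < s)
    (Ω : Set (EuclideanSpace ℝ (Fin n))) (hΩ : MeasurableSet Ω) (hΩb : IsBounded Ω)
    {a b : ℝ} (hab : a < b) :
    Ls (n+1) s (_root_.cylinder Ω (Iic a)) (_root_.cylinder Ω (Ici b)) < ⊤ := by
  have hn1 : (1:ℝ) ≤ (n:ℝ) := by exact_mod_cast hn
  set q : ℝ := ((n:ℝ) + 1 + s) / 2 with hqdef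
  have hq : 1 < q := by rw [hqdef]; linarith
  have hqq : -((((n+1) : ℕ) : ℝ) + s) = (-q) + (-q) := by push_cast; rw [hqdef]; ring
  set S := _root_.cylinder Ω (Iic a) with hS
  set T := _root_.cylinder Ω (Ici b) with hT
  set G : EuclideanSpace ℝ (Fin (n+1)) → ℝ≥0∞ :=
    fun y => ENNReal.ofReal ((lastCoord y - a) ^ (-q)) with hG
  set H : EuclideanSpace ℝ (Fin (n+1)) → ℝ≥0∞ :=
    fun x => ENNReal.ofReal ((b - lastCoord x) ^ (-q)) with hH
  have hGm : Measurable G := by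
    have : Measurable fun X : EuclideanSpace ℝ (Fin (n+1)) => lastCoord X :=
      (measurable_pi_apply (Fin.last n)).comp (WithLp.measurable_ofLp _ _)
    rw [hG]; fun_prop
  have hHm : Measurable H := by
    have : Measurable fun X : EuclideanSpace ℝ (Fin (n+1)) => lastCoord X :=
      (measurable_pi_apply (Fin.last n)).comp (WithLp.measurable_ofLp _ _)
    rw [hH]; fun_prop
  set KT : ℝ≥0∞ := ∫⁻ y in T, G y with hKT
  have key : ∀ x ∈ S, ∀ y ∈ T,
      ENNReal.ofReal (dist x y ^ (-((((n+1) : ℕ) : ℝ) + s))) ≤ G y * H x := by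
    intro x hx y hy
    have hu : lastCoord x ≤ a := hx.2
    have ht : b ≤ lastCoord y := hy.2
    have hd : lastCoord y - lastCoord x ≤ dist x y := lastCoord_dist_le x y
    have hΔ : 0 < lastCoord y - lastCoord x := by linarith
    have hta : 0 < lastCoord y - a := by linarith
    have hbu : 0 < b - lastCoord x := by linarith
    have step1 : dist x y ^ (-((((n+1) : ℕ) : ℝ) + s))
        ≤ (lastCoord y - lastCoord x) ^ (-((((n+1) : ℕ) : ℝ) + s)) := by
      apply Real.rpow_le_rpow_of_nonpos hΔ hd
      rw [hqq]; linarith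
    have step2 : (lastCoord y - lastCoord x) ^ (-((((n+1) : ℕ) : ℝ) + s))
        = (lastCoord y - lastCoord x) ^ (-q) * (lastCoord y - lastCoord x) ^ (-q) := by
      rw [hqq, Real.rpow_add hΔ]
    have step3 : (lastCoord y - lastCoord x) ^ (-q) ≤ (lastCoord y - a) ^ (-q) :=
      Real.rpow_le_rpow_of_nonpos hta (by linarith) (by linarith)
    have step4 : (lastCoord y - lastCoord x) ^ (-q) ≤ (b - lastCoord x) ^ (-q) :=
      Real.rpow_le_rpow_of_nonpos hbu (by linarith) (by linarith)
    calc ENNReal.ofReal (dist x y ^ (-((((n+1) : ℕ) : ℝ) + s)))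
        ≤ ENNReal.ofReal ((lastCoord y - a) ^ (-q) * (b - lastCoord x) ^ (-q)) := by
          apply ENNReal.ofReal_le_ofReal
          calc dist x y ^ (-((((n+1) : ℕ) : ℝ) + s))
              ≤ (lastCoord y - lastCoord x) ^ (-q) * (lastCoord y - lastCoord x) ^ (-q) :=
                step1.trans step2.le
            _ ≤ (lastCoord y - a) ^ (-q) * (b - lastCoord x) ^ (-q) :=
                mul_le_mul step3 step4 (Real.rpow_nonneg hΔ.le _) (Real.rpow_nonneg hta.le _)
      _ = G y * H x := by
          rw [ENNReal.ofReal_mul (Real.rpow_nonneg hta.le _)]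
  have hΩv : volume Ω < ⊤ := hΩb.measure_lt_top
  calc Ls (n+1) s S T
      = ∫⁻ x in S, ∫⁻ y in T, ENNReal.ofReal (dist x y ^ (-((((n+1) : ℕ) : ℝ) + s))) := rfl
    _ ≤ ∫⁻ x in S, KT * H x := by
        apply setLIntegral_mono (hHm.const_mul KT)
        intro x hx
        calc ∫⁻ y in T, ENNReal.ofReal (dist x y ^ (-((((n+1) : ℕ) : ℝ) + s)))
            ≤ ∫⁻ y in T, G y * H x :=
              setLIntegral_mono (hGm.mul_const _) (fun y hy => key x hx y hy)
          _ = KT * H x := lintegral_mul_const' (H x) G ENNReal.ofReal_ne_top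
    _ = KT * ∫⁻ x in S, H x := lintegral_const_mul KT hHm
    _ = ((∫⁻ t in Ici b, ENNReal.ofReal ((t - a) ^ (-q))) * volume Ω)
        * ((∫⁻ u in Iic a, ENNReal.ofReal ((b - u) ^ (-q))) * volume Ω) := by
        rw [hKT, hT, hS, hG, hH,
          lintegral_cylinder Ω hΩ (Ici b) (fun t => ENNReal.ofReal ((t - a) ^ (-q))) (by fun_prop),
          lintegral_cylinder Ω hΩ (Iic a) (fun t => ENNReal.ofReal ((b - t) ^ (-q))) (by fun_prop)]
    _ < ⊤ := by
        apply ENNReal.mul_lt_top <;> apply ENNReal.mul_lt_top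
        · exact oneDim_Ici hab hq
        · exact hΩv
        · exact oneDim_Iic hab hq
        · exact hΩv

/-- first part of Theorem 1.13: if inside the infinite cylinder `Ω × ℝ` the set
`E` is trapped between `Ω × (−∞,−k]` and `Ω × (−∞,k]` (up to null sets) and `E` has finite
`s`-perimeter in the truncated cylinder `Ω^{k+1} = Ω × (−k−1,k+1)`, then the local part of the
`s`-perimeter of `E` in the infinite cylinder is finite. -/
theorem local_part_finite_in_cylinder
    (n : ℕ) (hn : 1 ≤ n) (s : ℝ) (hs : s ∈ Set.Ioo (0 : ℝ) 1)
    (Ω : Set (EuclideanSpace ℝ (Fin n))) (hΩo : IsOpen Ω) (hΩb : IsBounded Ω)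
    (E : Set (EuclideanSpace ℝ (Fin (n + 1)))) (hE : MeasurableSet E)
    (k : ℕ)
    (hlow : volume (cylinder Ω (Set.Iic (-(k : ℝ))) \ (E ∩ cylinder Ω Set.univ)) = 0)
    (hup : volume ((E ∩ cylinder Ω Set.univ) \ cylinder Ω (Set.Iic (k : ℝ))) = 0)
    (hfin : Ps (n + 1) s E (cylinder Ω (Set.Ioo (-((k : ℝ) + 1)) ((k : ℝ) + 1))) < ⊤) :
    PsL (n + 1) s E (cylinder Ω Set.univ) < ⊤ := by
  set O := cylinder Ω (Set.Ioo (-((k : ℝ) + 1)) ((k : ℝ) + 1)) with hO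
  set A := E ∩ cylinder Ω Set.univ with hA
  set B := Eᶜ ∩ cylinder Ω Set.univ with hB
  set S := cylinder Ω (Iic (-((k : ℝ) + 1))) with hSdef
  set T := cylinder Ω (Ici ((k : ℝ) + 1)) with hTdef
  -- a.e. inclusions
  have hAS : (A \ O : Set _) ≤ᵐ[volume] S := by
    rw [ae_le_set]
    refine measure_mono_null (t := A \ cylinder Ω (Set.Iic (k : ℝ))) ?_ hup
    rintro x ⟨⟨hxA, hxO⟩, hxS⟩
    refine ⟨hxA, fun hxk => ?_⟩
    have hxΩ : projT x ∈ Ω := hxk.1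
    have hlast : lastCoord x ≤ (k : ℝ) := hxk.2
    have : lastCoord x ∉ Set.Ioo (-((k : ℝ) + 1)) ((k : ℝ) + 1) := fun hmem => hxO ⟨hxΩ, hmem⟩
    rw [Set.mem_Ioo, not_and_or, not_lt, not_lt] at this
    rcases this with h1 | h1
    · exact hxS ⟨hxΩ, h1⟩
    · linarith
  have hBT : (B \ O : Set _) ≤ᵐ[volume] T := by
    rw [ae_le_set]
    refine measure_mono_null (t := cylinder Ω (Set.Iic (-(k : ℝ))) \ A) ?_ hlow
    rintro x ⟨⟨hxB, hxO⟩, hxT⟩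
    have hxΩ : projT x ∈ Ω := hxB.2.1
    have hxE : x ∈ Eᶜ := hxB.1
    have : lastCoord x ∉ Set.Ioo (-((k : ℝ) + 1)) ((k : ℝ) + 1) := fun hmem => hxO ⟨hxΩ, hmem⟩
    rw [Set.mem_Ioo, not_and_or, not_lt, not_lt] at this
    have hlast : lastCoord x ≤ -((k : ℝ) + 1) := by
      rcases this with h1 | h1
      · exact h1
      · exact absurd ⟨hxΩ, h1⟩ hxT
    refine ⟨⟨hxΩ, by simpa using by linarith [hlast]⟩, fun hxA => hxE hxA.1⟩
  -- the four pieces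
  have hdecomp : PsL (n+1) s E (cylinder Ω Set.univ) = Ls (n+1) s A B := rfl
  have h1 : Ls (n+1) s A B ≤ Ls (n+1) s (A ∩ O) B + Ls (n+1) s (A \ O) B := by
    calc Ls (n+1) s A B = Ls (n+1) s ((A ∩ O) ∪ (A \ O)) B := by rw [Set.inter_union_diff]
      _ ≤ _ := Ls_union_left _ _ _
  have hsplit : ∀ X : Set (EuclideanSpace ℝ (Fin (n+1))),
      Ls (n+1) s X B ≤ Ls (n+1) s X (B ∩ O) + Ls (n+1) s X (B \ O) := by
    intro X
    calc Ls (n+1) s X B = Ls (n+1) s X ((B ∩ O) ∪ (B \ O)) := by rw [Set.inter_union_diff]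
      _ ≤ _ := Ls_union_right _ _ _
  -- comparisons with the perimeter pieces
  have sub1 : A ∩ O ⊆ E ∩ O := fun x hx => ⟨hx.1.1, hx.2⟩
  have sub2 : B ∩ O ⊆ Eᶜ ∩ O := fun x hx => ⟨hx.1.1, hx.2⟩
  have sub3 : A \ O ⊆ E \ O := fun x hx => ⟨hx.1.1, hx.2⟩
  have sub4 : B \ O ⊆ Eᶜ \ O := fun x hx => ⟨hx.1.1, hx.2⟩
  have c1 : Ls (n+1) s (A ∩ O) (B ∩ O) ≤ Ls (n+1) s (E ∩ O) (Eᶜ ∩ O) :=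
    Ls_mono (HasSubset.Subset.eventuallyLE sub1) (HasSubset.Subset.eventuallyLE sub2)
  have c2 : Ls (n+1) s (A ∩ O) (B \ O) ≤ Ls (n+1) s (E ∩ O) (Eᶜ \ O) :=
    Ls_mono (HasSubset.Subset.eventuallyLE sub1) (HasSubset.Subset.eventuallyLE sub4)
  have c3 : Ls (n+1) s (A \ O) (B ∩ O) ≤ Ls (n+1) s (E \ O) (Eᶜ ∩ O) :=
    Ls_mono (HasSubset.Subset.eventuallyLE sub3) (HasSubset.Subset.eventuallyLE sub2)
  have c4 : Ls (n+1) s (A \ O) (B \ O) ≤ Ls (n+1) s S T := Ls_mono hAS hBT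
  -- finiteness of the three perimeter pieces
  have hf1 : Ls (n+1) s (E ∩ O) (Eᶜ ∩ O) < ⊤ :=
    lt_of_le_of_lt (le_add_right (le_add_right le_rfl)) hfin
  have hf2 : Ls (n+1) s (E ∩ O) (Eᶜ \ O) < ⊤ :=
    lt_of_le_of_lt (le_add_right (le_add_self)) hfin
  have hf3 : Ls (n+1) s (E \ O) (Eᶜ ∩ O) < ⊤ :=
    lt_of_le_of_lt le_add_self hfin
  have hk0 : (0:ℝ) ≤ (k:ℝ) := Nat.cast_nonneg k
  have hf4 : Ls (n+1) s S T < ⊤ := by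
    rw [hSdef, hTdef]
    exact Ls_sep hn hs.1 Ω hΩo.measurableSet hΩb (by linarith)
  calc PsL (n+1) s E (cylinder Ω Set.univ) = Ls (n+1) s A B := hdecomp
    _ ≤ Ls (n+1) s (A ∩ O) B + Ls (n+1) s (A \ O) B := h1
    _ ≤ (Ls (n+1) s (A ∩ O) (B ∩ O) + Ls (n+1) s (A ∩ O) (B \ O))
        + (Ls (n+1) s (A \ O) (B ∩ O) + Ls (n+1) s (A \ O) (B \ O)) :=
      add_le_add (hsplit _) (hsplit _)
    _ ≤ (Ls (n+1) s (E ∩ O) (Eᶜ ∩ O) + Ls (n+1) s (E ∩ O) (Eᶜ \ O))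
        + (Ls (n+1) s (E \ O) (Eᶜ ∩ O) + Ls (n+1) s S T) :=
      add_le_add (add_le_add c1 c2) (add_le_add c3 c4)
    _ < ⊤ := by
      apply ENNReal.add_lt_top.2
      exact ⟨ENNReal.add_lt_top.2 ⟨hf1, hf2⟩, ENNReal.add_lt_top.2 ⟨hf3, hf4⟩⟩
end

section
/- Let Ω ⊆ ℝ^n be a nonempty bounded open set, s ∈ (0,1), and let E ⊆ ℝ^{n+1} be measurable. Suppose that for some k ∈ ℕ one has {(x,t) ∈ ℝ^{n+1} : t ≤ −k} ⊆ E ⊆ {(x,t) ∈ ℝ^{n+1} : t ≤ k} (up to null sets). Then the nonlocal part of the s-perimeter in the infinite cylinder is infinite: P_s^{NL}(E, Ω^∞) = ∞. -/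
open MeasureTheory Set Filter Topology Metric Bornology
open scoped ENNReal NNReal symmDiff

/-- The nonlocal part of the fractional `s`-perimeter. -/
noncomputable def PsNL (n : ℕ) (s : ℝ) (E Ω : Set (EuclideanSpace ℝ (Fin n))) : ℝ≥0∞ :=
  Ls n s (E ∩ Ω) (Eᶜ \ Ω) + Ls n s (E \ Ω) (Eᶜ ∩ Ω)

/-- build a point of ℝ^{n+1} from base and height -/
noncomputable def mkpt {n : ℕ} (x : EuclideanSpace ℝ (Fin n)) (t : ℝ) :
    EuclideanSpace ℝ (Fin (n + 1)) :=
  WithLp.toLp 2 (fun i : Fin (n + 1) => if h : (i : ℕ) < n then x ⟨i, h⟩ else t)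

lemma projT_mkpt {n : ℕ} (x : EuclideanSpace ℝ (Fin n)) (t : ℝ) : projT (mkpt x t) = x := by
  ext j
  simp [projT, mkpt, Fin.castSucc, Fin.is_lt]

lemma lastCoord_mkpt {n : ℕ} (x : EuclideanSpace ℝ (Fin n)) (t : ℝ) : lastCoord (mkpt x t) = t := by
  simp [lastCoord, mkpt, Fin.last]

lemma dist_sq_split {n : ℕ} (X Y : EuclideanSpace ℝ (Fin (n + 1))) :
    dist X Y = Real.sqrt (dist (projT X) (projT Y) ^ 2 + dist (lastCoord X) (lastCoord Y) ^ 2) := by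
  rw [EuclideanSpace.dist_eq, Fin.sum_univ_castSucc]
  congr 1
  rw [EuclideanSpace.dist_eq, Real.sq_sqrt (by positivity)]
  rfl

lemma dist_projT_le {n : ℕ} (X Y : EuclideanSpace ℝ (Fin (n + 1))) :
    dist (projT X) (projT Y) ≤ dist X Y := by
  rw [dist_sq_split]
  have h := Real.sqrt_le_sqrt (le_add_of_nonneg_right (sq_nonneg (dist (lastCoord X) (lastCoord Y))) :
    dist (projT X) (projT Y) ^ 2 ≤ _)
  rwa [Real.sqrt_sq dist_nonneg] at h

lemma dist_lastCoord_le {n : ℕ} (X Y : EuclideanSpace ℝ (Fin (n + 1))) :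
    dist (lastCoord X) (lastCoord Y) ≤ dist X Y := by
  rw [dist_sq_split]
  have h := Real.sqrt_le_sqrt (le_add_of_nonneg_left (sq_nonneg (dist (projT X) (projT Y))) :
    dist (lastCoord X) (lastCoord Y) ^ 2 ≤ _)
  rwa [Real.sqrt_sq dist_nonneg] at h

lemma dist_le_add_dist {n : ℕ} (X Y : EuclideanSpace ℝ (Fin (n + 1))) :
    dist X Y ≤ dist (projT X) (projT Y) + dist (lastCoord X) (lastCoord Y) := by
  rw [dist_sq_split]
  have h : dist (projT X) (projT Y) ^ 2 + dist (lastCoord X) (lastCoord Y) ^ 2 ≤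
      (dist (projT X) (projT Y) + dist (lastCoord X) (lastCoord Y)) ^ 2 := by
    nlinarith [dist_nonneg (x := projT X) (y := projT Y),
      dist_nonneg (x := lastCoord X) (y := lastCoord Y)]
  calc _ ≤ Real.sqrt ((dist (projT X) (projT Y) + dist (lastCoord X) (lastCoord Y)) ^ 2) :=
        Real.sqrt_le_sqrt h
    _ = _ := Real.sqrt_sq (by positivity)

set_option maxHeartbeats 2000000 in
/-- second part of Theorem 1.13: if `E ⊆ ℝ^{n+1}` is trapped between the
half-spaces `{t ≤ −k}` and `{t ≤ k}` (up to null sets), then the nonlocal part of its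
`s`-perimeter in the infinite cylinder `Ω × ℝ` is infinite. -/
theorem nonlocal_part_infinite_in_cylinder
    (n : ℕ) (hn : 1 ≤ n) (s : ℝ) (hs : s ∈ Set.Ioo (0 : ℝ) 1)
    (Ω : Set (EuclideanSpace ℝ (Fin n))) (hΩo : IsOpen Ω) (hΩb : IsBounded Ω)
    (hΩne : Ω.Nonempty)
    (E : Set (EuclideanSpace ℝ (Fin (n + 1)))) (hE : MeasurableSet E)
    (k : ℕ)
    (hlow : volume ({X : EuclideanSpace ℝ (Fin (n + 1)) | lastCoord X ≤ -(k : ℝ)} \ E) = 0)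
    (hup : volume (E \ {X : EuclideanSpace ℝ (Fin (n + 1)) | lastCoord X ≤ (k : ℝ)}) = 0) :
    PsNL (n + 1) s E (cylinder Ω Set.univ) = ⊤ := by
  obtain ⟨hs0, hs1⟩ := hs
  obtain ⟨x₀, hx₀⟩ := hΩne
  obtain ⟨r, hr0, hrball⟩ := Metric.isOpen_iff.1 hΩo x₀ hx₀
  obtain ⟨R₀, hR₀⟩ := hΩb.subset_ball x₀
  set R : ℝ := max R₀ 1 with hRdef
  have hR1 : (1:ℝ) ≤ R := le_max_right _ _
  have hR0 : (0:ℝ) < R := lt_of_lt_of_le one_pos hR1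
  have hΩR : Ω ⊆ ball x₀ R := hR₀.trans (Metric.ball_subset_ball (le_max_left _ _))
  set e : EuclideanSpace ℝ (Fin n) := EuclideanSpace.single (⟨0, hn⟩ : Fin n) (1:ℝ) with hedef
  have he : ‖e‖ = 1 := by rw [hedef, EuclideanSpace.norm_single]; simp
  set C : ℝ := 8 * (r + R + (k:ℝ) + 1) with hCdef
  have hC0 : 0 < C := by positivity
  set ex : ℝ := -((n:ℝ) + 1 + s) with hexdef
  have hexneg : ex ≤ 0 := by rw [hexdef]; push_cast; nlinarith [Nat.cast_nonneg (α := ℝ) n]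
  set κ : ℝ := ((8:ℝ) ^ (n+1))⁻¹ * C ^ ex with hκdef
  have hκ0 : 0 < κ := by
    rw [hκdef]; positivity
  set v₁ : ℝ≥0∞ := volume (Metric.ball (0 : EuclideanSpace ℝ (Fin (n+1))) r) with hv₁
  set V : ℝ≥0∞ := volume (Metric.ball (0 : EuclideanSpace ℝ (Fin (n+1))) 1) with hV
  have hv₁0 : v₁ ≠ 0 := (measure_ball_pos _ _ hr0).ne'
  have hV0 : V ≠ 0 := (measure_ball_pos _ _ one_pos).ne'
  set C₀ : Set (EuclideanSpace ℝ (Fin (n+1))) := cylinder Ω Set.univ with hC₀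
  have key : ∀ m : ℕ, 1 ≤ m →
      (v₁ * V) * ENNReal.ofReal (κ * (m:ℝ) ^ (1 - s)) ≤ Ls (n+1) s (E ∩ C₀) (Eᶜ \ C₀) := by
    intro m hm
    have hm1 : (1:ℝ) ≤ (m:ℝ) := by exact_mod_cast hm
    have hm0 : (0:ℝ) < (m:ℝ) := lt_of_lt_of_le one_pos hm1
    set P : ℕ → EuclideanSpace ℝ (Fin (n+1)) :=
      fun i => mkpt x₀ (-(k:ℝ) - r - 2*r*i) with hP
    set Q : EuclideanSpace ℝ (Fin (n+1)) :=
      mkpt (x₀ + (R + (m:ℝ)/4) • e) ((k:ℝ) + (m:ℝ)/2) with hQ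
    set A : Set (EuclideanSpace ℝ (Fin (n+1))) := ⋃ i ∈ Finset.range m, Metric.ball (P i) r
      with hA
    set B : Set (EuclideanSpace ℝ (Fin (n+1))) := Metric.ball Q ((m:ℝ)/8) with hB
    -- basic membership facts
    have hAfact : ∀ X ∈ A, lastCoord X ≤ -(k:ℝ) ∧ X ∈ C₀ := by
      intro X hX
      simp only [hA, Finset.mem_range, Set.mem_iUnion, Metric.mem_ball] at hX
      obtain ⟨i, hi, hXi⟩ := hX
      have h1 : dist (lastCoord X) (lastCoord (P i)) ≤ dist X (P i) := dist_lastCoord_le X (P i)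
      have h2 : dist (projT X) (projT (P i)) ≤ dist X (P i) := dist_projT_le X (P i)
      rw [hP, lastCoord_mkpt, Real.dist_eq] at h1
      rw [hP, projT_mkpt] at h2
      have hi0 : (0:ℝ) ≤ (i:ℝ) := Nat.cast_nonneg i
      have hlast : lastCoord X ≤ -(k:ℝ) := by
        have := abs_le.1 (h1.trans hXi.le)
        nlinarith [this.2]
      refine ⟨hlast, ?_, trivial⟩
      exact hrball (Metric.mem_ball.2 (lt_of_le_of_lt h2 hXi))
    have hBfact : ∀ Y ∈ B, (k:ℝ) < lastCoord Y ∧ Y ∉ C₀ := by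
      intro Y hY
      rw [hB, Metric.mem_ball] at hY
      have h1 : dist (lastCoord Y) (lastCoord Q) ≤ dist Y Q := dist_lastCoord_le Y Q
      have h2 : dist (projT Y) (projT Q) ≤ dist Y Q := dist_projT_le Y Q
      rw [hQ, lastCoord_mkpt, Real.dist_eq] at h1
      rw [hQ, projT_mkpt] at h2
      have habs := abs_le.1 (h1.trans hY.le)
      have hlast : (k:ℝ) < lastCoord Y := by nlinarith [habs.1]
      refine ⟨hlast, ?_⟩
      intro hYC
      have hproj : projT Y ∈ Ω := hYC.1
      have hd0 : dist (x₀ + (R + (m:ℝ)/4) • e) x₀ = R + (m:ℝ)/4 := by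
        rw [dist_eq_norm, add_sub_cancel_left, norm_smul, he, Real.norm_eq_abs,
          abs_of_nonneg (by nlinarith), mul_one]
      have : dist (projT Y) x₀ < R := Metric.mem_ball.1 (hΩR hproj)
      have htri : dist (x₀ + (R + (m:ℝ)/4) • e) x₀ ≤
          dist (x₀ + (R + (m:ℝ)/4) • e) (projT Y) + dist (projT Y) x₀ := dist_triangle _ _ _
      rw [dist_comm] at h2
      nlinarith [htri, hd0]
    -- distance bounds
    have hdist : ∀ X ∈ A, ∀ Y ∈ B, 0 < dist X Y ∧ dist X Y ≤ C * (m:ℝ) := by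
      intro X hX Y hY
      have hXf := hAfact X hX
      have hYf := hBfact Y hY
      constructor
      · have h1 : dist (lastCoord X) (lastCoord Y) ≤ dist X Y := dist_lastCoord_le X Y
        rw [Real.dist_eq] at h1
        have : (0:ℝ) < lastCoord Y - lastCoord X := by
          have := hXf.1; have := hYf.1
          have hk0 : (0:ℝ) ≤ (k:ℝ) := Nat.cast_nonneg k
          linarith
        calc (0:ℝ) < lastCoord Y - lastCoord X := this
          _ ≤ |lastCoord X - lastCoord Y| := by rw [abs_sub_comm]; exact le_abs_self _
          _ ≤ dist X Y := h1
      · -- upper bound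
        simp only [hA, Finset.mem_range, Set.mem_iUnion, Metric.mem_ball] at hX
        obtain ⟨i, hi, hXi⟩ := hX
        rw [hB, Metric.mem_ball] at hY
        have hile : (i:ℝ) ≤ (m:ℝ) - 1 := by
          have : (i:ℝ) + 1 ≤ (m:ℝ) := by exact_mod_cast Nat.succ_le_of_lt hi
          linarith
        have hi0 : (0:ℝ) ≤ (i:ℝ) := Nat.cast_nonneg i
        have hk0 : (0:ℝ) ≤ (k:ℝ) := Nat.cast_nonneg k
        have hT := dist_le_add_dist X Y
        -- proj part
        have hp1 : dist (projT X) (projT (P i)) ≤ dist X (P i) := dist_projT_le X (P i)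
        have hp2 : dist (lastCoord X) (lastCoord (P i)) ≤ dist X (P i) := dist_lastCoord_le X (P i)
        have hq1 : dist (projT Y) (projT Q) ≤ dist Y Q := dist_projT_le Y Q
        have hq2 : dist (lastCoord Y) (lastCoord Q) ≤ dist Y Q := dist_lastCoord_le Y Q
        rw [hP, projT_mkpt] at hp1
        rw [hP, lastCoord_mkpt] at hp2
        rw [hQ, projT_mkpt] at hq1
        rw [hQ, lastCoord_mkpt] at hq2
        have hd0 : dist x₀ (x₀ + (R + (m:ℝ)/4) • e) = R + (m:ℝ)/4 := by
          rw [dist_comm, dist_eq_norm, add_sub_cancel_left, norm_smul, he, Real.norm_eq_abs,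
            abs_of_nonneg (by nlinarith), mul_one]
        have hproj : dist (projT X) (projT Y) ≤ r + (R + (m:ℝ)/4) + (m:ℝ)/8 := by
          calc dist (projT X) (projT Y) ≤
              dist (projT X) x₀ + dist x₀ (x₀ + (R + (m:ℝ)/4) • e) +
                dist (x₀ + (R + (m:ℝ)/4) • e) (projT Y) := dist_triangle4 _ _ _ _
            _ ≤ r + (R + (m:ℝ)/4) + (m:ℝ)/8 := by
                rw [hd0, dist_comm (x₀ + (R + (m:ℝ)/4) • e)]
                exact add_le_add (add_le_add (hp1.trans hXi.le) (le_refl _)) (hq1.trans hY.le)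
        have hlastb : dist (lastCoord X) (lastCoord Y) ≤
            r + (2*(k:ℝ) + r + 2*r*(i:ℝ) + (m:ℝ)/2) + (m:ℝ)/8 := by
          calc dist (lastCoord X) (lastCoord Y) ≤
              dist (lastCoord X) (-(k:ℝ) - r - 2*r*(i:ℝ)) +
                dist (-(k:ℝ) - r - 2*r*(i:ℝ)) ((k:ℝ) + (m:ℝ)/2) +
                dist ((k:ℝ) + (m:ℝ)/2) (lastCoord Y) := dist_triangle4 _ _ _ _
            _ ≤ r + (2*(k:ℝ) + r + 2*r*(i:ℝ) + (m:ℝ)/2) + (m:ℝ)/8 := by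
                refine add_le_add (add_le_add (hp2.trans hXi.le) ?_) ?_
                · rw [Real.dist_eq]
                  rw [abs_le]
                  constructor <;> nlinarith
                · rw [dist_comm]
                  exact (hq2.trans hY.le)
        rw [hCdef]
        nlinarith [hT, hproj, hlastb, mul_nonneg hr0.le hi0]
    -- a.e. identifications
    have hAE : (E ∩ A : Set (EuclideanSpace ℝ (Fin (n+1)))) =ᵐ[volume] A := by
      rw [MeasureTheory.ae_eq_set]
      constructor
      · have : (E ∩ A) \ A = ∅ := by ext x; simp (config := {contextual := true}) [Set.mem_diff]
        simp [this]
      · refine measure_mono_null ?_ hlow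
        intro X hX
        exact ⟨(hAfact X hX.1).1, fun hXE => hX.2 ⟨hXE, hX.1⟩⟩
    have hBE : (Eᶜ ∩ B : Set (EuclideanSpace ℝ (Fin (n+1)))) =ᵐ[volume] B := by
      rw [MeasureTheory.ae_eq_set]
      constructor
      · have : (Eᶜ ∩ B) \ B = ∅ := by ext x; simp (config := {contextual := true}) [Set.mem_diff]
        simp [this]
      · refine measure_mono_null ?_ hup
        intro Y hY
        have hYE : Y ∈ E := by
          by_contra hc
          exact hY.2 ⟨hc, hY.1⟩
        exact ⟨hYE, fun hle => absurd (hBfact Y hY.1).1 (not_lt.2 hle)⟩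
    -- measurability of A
    have hAm : MeasurableSet A := by
      rw [hA]
      exact (Finset.range m).measurableSet_biUnion fun i _ => measurableSet_ball
    -- the constant lower bound for the kernel
    set c : ℝ≥0∞ := ENNReal.ofReal ((C * (m:ℝ)) ^ ex) with hc
    have hexeq : -(((n+1:ℕ)):ℝ) - s = ex := by rw [hexdef]; push_cast; ring
    have hexeq' : -((((n+1:ℕ)):ℝ) + s) = ex := by rw [hexdef]; push_cast; ring
    have hker : ∀ X ∈ A, ∀ Y ∈ B, c ≤ ENNReal.ofReal (dist X Y ^ ex) := by
      intro X hX Y hY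
      obtain ⟨hd0, hdC⟩ := hdist X hX Y hY
      exact ENNReal.ofReal_le_ofReal (Real.rpow_le_rpow_of_nonpos hd0 hdC hexneg)
    -- volume computations
    have hvolA : volume A = (m : ℝ≥0∞) * v₁ := by
      have hdisj : (↑(Finset.range m) : Set ℕ).PairwiseDisjoint
          (fun i => Metric.ball (P i) r) := by
        intro i _ j _ hij
        apply Metric.ball_disjoint_ball
        have h1 : (1:ℝ) ≤ |(i:ℝ) - (j:ℝ)| := by
          rcases lt_or_gt_of_ne hij with h | h
          · have h' : (i:ℝ) + 1 ≤ (j:ℝ) := by exact_mod_cast h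
            rw [abs_sub_comm, abs_of_nonneg (by linarith)]; linarith
          · have h' : (j:ℝ) + 1 ≤ (i:ℝ) := by exact_mod_cast h
            rw [abs_of_nonneg (by linarith)]; linarith
        have h2 : dist (lastCoord (P i)) (lastCoord (P j)) ≤ dist (P i) (P j) :=
          dist_lastCoord_le _ _
        rw [hP, lastCoord_mkpt, lastCoord_mkpt, Real.dist_eq] at h2
        calc r + r = 2*r*1 := by ring
          _ ≤ 2*r*|(i:ℝ) - (j:ℝ)| := by nlinarith
          _ = |(-(k:ℝ) - r - 2*r*(i:ℕ)) - (-(k:ℝ) - r - 2*r*(j:ℕ))| := by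
              rw [show (-(k:ℝ) - r - 2*r*(i:ℕ)) - (-(k:ℝ) - r - 2*r*(j:ℕ))
                  = 2*r*((j:ℝ) - (i:ℝ)) by ring, abs_mul, abs_of_nonneg (by linarith : (0:ℝ) ≤ 2*r),
                abs_sub_comm]
          _ ≤ dist (P i) (P j) := h2
      rw [hA, measure_biUnion_finset hdisj (fun i _ => measurableSet_ball)]
      have hconst : ∀ i ∈ Finset.range m, volume (Metric.ball (P i) r) = v₁ := by
        intro i _
        rw [hv₁, Measure.addHaar_ball_center]
      rw [Finset.sum_congr rfl hconst, Finset.sum_const, Finset.card_range, nsmul_eq_mul]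
    have hvolB : volume B = ENNReal.ofReal (((m:ℝ)/8) ^ (n+1)) * V := by
      rw [hB, Measure.addHaar_ball volume Q (by positivity : (0:ℝ) ≤ (m:ℝ)/8)]
      rw [finrank_euclideanSpace_fin]
    -- the integral chain
    have hLs : Ls (n+1) s (E ∩ C₀) (Eᶜ \ C₀) =
        ∫⁻ X in E ∩ C₀, ∫⁻ Y in Eᶜ \ C₀, ENNReal.ofReal (dist X Y ^ ex) := by
      simp only [Ls, hexeq']
    have step : c * volume B * volume A ≤ Ls (n+1) s (E ∩ C₀) (Eᶜ \ C₀) := by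
      have hsub1 : E ∩ A ⊆ E ∩ C₀ := inter_subset_inter_right E (fun X hX => (hAfact X hX).2)
      have hsub2 : (Eᶜ ∩ B : Set (EuclideanSpace ℝ (Fin (n+1)))) ⊆ Eᶜ \ C₀ :=
        fun Y hY => ⟨hY.1, (hBfact Y hY.2).2⟩
      rw [hLs]
      calc c * volume B * volume A
          = ∫⁻ _ in A, c * volume B := (setLIntegral_const _ _).symm
        _ ≤ ∫⁻ X in A, ∫⁻ Y in B, ENNReal.ofReal (dist X Y ^ ex) := by
            apply lintegral_mono_ae
            rw [ae_restrict_iff' hAm]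
            filter_upwards with X hX
            calc c * volume B = ∫⁻ _ in B, c := (setLIntegral_const _ _).symm
              _ ≤ ∫⁻ Y in B, ENNReal.ofReal (dist X Y ^ ex) := by
                  apply lintegral_mono_ae
                  rw [ae_restrict_iff' measurableSet_ball]
                  exact ae_of_all _ fun Y hY => hker X hX Y hY
        _ = ∫⁻ X in E ∩ A, ∫⁻ Y in Eᶜ ∩ B, ENNReal.ofReal (dist X Y ^ ex) := by
            rw [setLIntegral_congr hAE]
            exact lintegral_congr fun X => (setLIntegral_congr hBE).symm
        _ ≤ ∫⁻ X in E ∩ C₀, ∫⁻ Y in Eᶜ \ C₀, ENNReal.ofReal (dist X Y ^ ex) :=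
            lintegral_mono' (Measure.restrict_mono hsub1 le_rfl)
              (fun X => lintegral_mono' (Measure.restrict_mono hsub2 le_rfl) le_rfl)
    -- arithmetic
    have harith : c * ENNReal.ofReal (((m:ℝ)/8) ^ (n+1)) * (m : ℝ≥0∞) =
        ENNReal.ofReal (κ * (m:ℝ) ^ (1 - s)) := by
      rw [hc, ← ENNReal.ofReal_natCast m, ← ENNReal.ofReal_mul (by positivity),
        ← ENNReal.ofReal_mul (by positivity)]
      congr 1
      have hm' : (m:ℝ) ^ ex * (m:ℝ) ^ (n+1) * (m:ℝ) = (m:ℝ) ^ (1 - s) := by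
        rw [← Real.rpow_natCast (m:ℝ) (n+1), ← Real.rpow_add hm0, ← Real.rpow_add_one hm0.ne']
        congr 1
        rw [hexdef]; push_cast; ring
      calc (C * (m:ℝ)) ^ ex * ((m:ℝ)/8) ^ (n+1) * (m:ℝ)
          = C ^ ex * (m:ℝ) ^ ex * ((m:ℝ) ^ (n+1) / 8 ^ (n+1)) * (m:ℝ) := by
            rw [Real.mul_rpow hC0.le hm0.le, div_pow]
        _ = C ^ ex * ((8:ℝ) ^ (n+1))⁻¹ * ((m:ℝ) ^ ex * (m:ℝ) ^ (n+1) * (m:ℝ)) := by ring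
        _ = κ * (m:ℝ) ^ (1 - s) := by rw [hm', hκdef]; ring
    calc (v₁ * V) * ENNReal.ofReal (κ * (m:ℝ) ^ (1 - s))
        = c * volume B * volume A := by
          rw [hvolA, hvolB, ← harith]; ring
      _ ≤ Ls (n+1) s (E ∩ C₀) (Eᶜ \ C₀) := step
  -- conclusion
  have hκtend : Tendsto (fun m : ℕ => ENNReal.ofReal (κ * (m:ℝ) ^ (1 - s))) atTop (𝓝 ⊤) := by
    apply ENNReal.tendsto_ofReal_atTop.comp
    exact ((tendsto_rpow_atTop (by linarith : (0:ℝ) < 1 - s)).comp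
      tendsto_natCast_atTop_atTop).const_mul_atTop hκ0
  have hvV : v₁ * V ≠ 0 := mul_ne_zero hv₁0 hV0
  have htend : Tendsto (fun m : ℕ => (v₁ * V) * ENNReal.ofReal (κ * (m:ℝ) ^ (1 - s)))
      atTop (𝓝 ⊤) := by
    have h := ENNReal.Tendsto.const_mul (a := v₁ * V) hκtend (Or.inl ENNReal.top_ne_zero)
    rwa [ENNReal.mul_top hvV] at h
  have hle : ⊤ ≤ Ls (n+1) s (E ∩ C₀) (Eᶜ \ C₀) :=
    le_of_tendsto htend (eventually_atTop.2 ⟨1, key⟩)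
  simp only [PsNL]
  rw [eq_top_iff]
  exact le_trans hle le_self_add
end

section
/- Let s ∈ (0,1), let Ω ⊆ ℝ^n be an open set and let (Ω_k) be a sequence of open sets with Ω_k →loc Ω. Then for every measurable set E ⊆ ℝ^n one has P_s(E,Ω) ≤ liminf_{k→∞} P_s(E,Ω_k). If moreover Ω_k ⊆ Ω for every k, then P_s(E,Ω) = lim_{k→∞} P_s(E,Ω_k) (as an identity in [0,∞]). Consequently, P_s(E,Ω) = sup{ P_s(E,Ω') : Ω' open, Ω' ⊂⊂ Ω }. -/
open MeasureTheory Set Filter Topology Metric Bornology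
open scoped ENNReal NNReal symmDiff

def LocConv (n : ℕ) (A : ℕ → Set (EuclideanSpace ℝ (Fin n)))
    (B : Set (EuclideanSpace ℝ (Fin n))) : Prop :=
  ∀ K : Set (EuclideanSpace ℝ (Fin n)), IsBounded K →
    Tendsto (fun h => volume ((A h ∆ B) ∩ K)) atTop (𝓝 0)

namespace FracAux

abbrev V (n : ℕ) := EuclideanSpace ℝ (Fin n)

noncomputable def ker (n : ℕ) (s : ℝ) : V n × V n → ℝ≥0∞ :=
  fun p => ENNReal.ofReal (dist p.1 p.2 ^ (-((n : ℝ) + s)))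

lemma ker_meas (n : ℕ) (s : ℝ) : Measurable (ker n s) := by
  have h : Measurable fun x : ℝ => ENNReal.ofReal (x ^ (-((n : ℝ) + s))) := by measurability
  exact h.comp (continuous_fst.dist continuous_snd).measurable

noncomputable def nu (n : ℕ) (s : ℝ) : Measure (V n × V n) :=
  ((volume : Measure (V n)).prod volume).withDensity (ker n s)

/-- The region of integration for the fractional perimeter. -/
def DD (n : ℕ) (E Ω : Set (V n)) : Set (V n × V n) :=
  (E ×ˢ Eᶜ) ∩ (Ω ×ˢ univ ∪ univ ×ˢ Ω)

lemma DD_meas {n : ℕ} {E Ω : Set (V n)} (hE : MeasurableSet E) (hΩ : MeasurableSet Ω) :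
    MeasurableSet (DD n E Ω) :=
  (hE.prod hE.compl).inter ((hΩ.prod MeasurableSet.univ).union (MeasurableSet.univ.prod hΩ))

lemma DD_mono {n : ℕ} (E : Set (V n)) {Ω₁ Ω₂ : Set (V n)} (h : Ω₁ ⊆ Ω₂) :
    DD n E Ω₁ ⊆ DD n E Ω₂ :=
  inter_subset_inter_right _ (union_subset_union (prod_mono_left h) (prod_mono_right h))

lemma Ls_eq (n : ℕ) (s : ℝ) {A B : Set (V n)} (hA : MeasurableSet A) (hB : MeasurableSet B) :
    Ls n s A B = nu n s (A ×ˢ B) := by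
  rw [nu, withDensity_apply _ (hA.prod hB), ← Measure.prod_restrict,
    lintegral_prod _ (ker_meas n s).aemeasurable]
  rfl

lemma Ps_eq (n : ℕ) (s : ℝ) {E Ω : Set (V n)} (hE : MeasurableSet E) (hΩ : MeasurableSet Ω) :
    Ps n s E Ω = nu n s (DD n E Ω) := by
  have h1 := Ls_eq n s (hE.inter hΩ) (hE.compl.inter hΩ)
  have h2 := Ls_eq n s (hE.inter hΩ) (hE.compl.diff hΩ)
  have h3 := Ls_eq n s (hE.diff hΩ) (hE.compl.inter hΩ)
  have hd12 : Disjoint ((E ∩ Ω) ×ˢ (Eᶜ ∩ Ω)) ((E ∩ Ω) ×ˢ (Eᶜ \ Ω)) := by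
    rw [Set.disjoint_left]
    rintro ⟨x, y⟩ ⟨-, hy1⟩ ⟨-, hy2⟩
    exact hy2.2 hy1.2
  have hd3 : Disjoint ((E ∩ Ω) ×ˢ (Eᶜ ∩ Ω) ∪ (E ∩ Ω) ×ˢ (Eᶜ \ Ω)) ((E \ Ω) ×ˢ (Eᶜ ∩ Ω)) := by
    rw [Set.disjoint_left]
    rintro ⟨x, y⟩ (⟨hx, -⟩ | ⟨hx, -⟩) ⟨hx3, -⟩ <;> exact hx3.2 hx.2
  have hm2 : MeasurableSet ((E ∩ Ω) ×ˢ (Eᶜ \ Ω)) := (hE.inter hΩ).prod (hE.compl.diff hΩ)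
  have hm3 : MeasurableSet ((E \ Ω) ×ˢ (Eᶜ ∩ Ω)) := (hE.diff hΩ).prod (hE.compl.inter hΩ)
  rw [Ps, h1, h2, h3, ← measure_union hd12 hm2, ← measure_union hd3 hm3]
  congr 1
  ext ⟨x, y⟩
  simp only [DD, mem_union, mem_prod, mem_inter_iff, mem_diff, mem_compl_iff, mem_univ,
    and_true, true_and]
  tauto

lemma Ps_mono (n : ℕ) (s : ℝ) {E Ω₁ Ω₂ : Set (V n)} (hE : MeasurableSet E)
    (h1 : MeasurableSet Ω₁) (h2 : MeasurableSet Ω₂) (h : Ω₁ ⊆ Ω₂) :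
    Ps n s E Ω₁ ≤ Ps n s E Ω₂ := by
  rw [Ps_eq n s hE h1, Ps_eq n s hE h2]
  exact measure_mono (DD_mono E h)

/-- Exhaustion of an open set by open sets compactly contained in it. -/
def exh (n : ℕ) (Ω : Set (V n)) (j : ℕ) : Set (V n) :=
  ball (0 : V n) j ∩ {x | (j : ℝ≥0∞)⁻¹ < EMetric.infEdist x Ωᶜ}

lemma exh_open (n : ℕ) (Ω : Set (V n)) (j : ℕ) : IsOpen (exh n Ω j) :=
  isOpen_ball.inter (isOpen_lt continuous_const EMetric.continuous_infEdist)

lemma exh_mono (n : ℕ) (Ω : Set (V n)) : Monotone (exh n Ω) := by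
  intro a b hab
  refine inter_subset_inter (ball_subset_ball (by exact_mod_cast hab)) ?_
  intro x hx
  exact lt_of_le_of_lt (ENNReal.inv_le_inv.mpr (by exact_mod_cast hab)) hx

lemma exh_closure_subset (n : ℕ) {Ω : Set (V n)} (hΩ : IsOpen Ω) (j : ℕ) :
    closure (exh n Ω j) ⊆ Ω := by
  have hcl : IsClosed {x : V n | (j : ℝ≥0∞)⁻¹ ≤ EMetric.infEdist x Ωᶜ} :=
    isClosed_le continuous_const EMetric.continuous_infEdist
  have h1 : closure (exh n Ω j) ⊆ {x | (j : ℝ≥0∞)⁻¹ ≤ EMetric.infEdist x Ωᶜ} := by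
    refine closure_minimal ?_ hcl
    intro x hx
    simp only [exh, mem_inter_iff, mem_setOf_eq] at hx
    exact le_of_lt hx.2
  intro x hx
  have hpos : 0 < EMetric.infEdist x Ωᶜ :=
    lt_of_lt_of_le (by simp [ENNReal.inv_pos]) (h1 hx)
  by_contra hxn
  have : x ∈ closure Ωᶜ := subset_closure hxn
  rw [EMetric.mem_closure_iff_infEdist_zero] at this
  exact hpos.ne' this

lemma exh_compact_closure (n : ℕ) (Ω : Set (V n)) (j : ℕ) :
    IsCompact (closure (exh n Ω j)) :=
  ((isBounded_ball.subset inter_subset_left)).isCompact_closure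

lemma exh_iUnion (n : ℕ) {Ω : Set (V n)} (hΩ : IsOpen Ω) : ⋃ j, exh n Ω j = Ω := by
  apply subset_antisymm
  · exact iUnion_subset fun j => (subset_closure).trans (exh_closure_subset n hΩ j)
  · intro x hx
    have hxc : x ∉ closure Ωᶜ := by
      rw [hΩ.isClosed_compl.closure_eq]; exact fun h => h hx
    have hpos : EMetric.infEdist x Ωᶜ ≠ 0 :=
      fun h0 => hxc (EMetric.mem_closure_iff_infEdist_zero.mpr h0)
    obtain ⟨j1, hj1⟩ := ENNReal.exists_inv_nat_lt hpos
    obtain ⟨j2, hj2⟩ := exists_nat_gt ‖x‖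
    refine mem_iUnion.mpr ⟨max j1 j2, ?_, ?_⟩
    · rw [mem_ball_zero_iff]
      exact lt_of_lt_of_le hj2 (by exact_mod_cast le_max_right j1 j2)
    · refine lt_of_le_of_lt (ENNReal.inv_le_inv.mpr ?_) hj1
      exact_mod_cast le_max_left j1 j2

lemma DD_iUnion (n : ℕ) (E : Set (V n)) (F : ℕ → Set (V n)) :
    DD n E (⋃ j, F j) = ⋃ j, DD n E (F j) := by
  ext ⟨x, y⟩
  simp only [DD, mem_iUnion, mem_inter_iff, mem_union, mem_prod, mem_univ, and_true, true_and]
  aesop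

lemma Ps_iSup_exh (n : ℕ) (s : ℝ) {E Ω : Set (V n)} (hE : MeasurableSet E) (hΩ : IsOpen Ω) :
    Ps n s E Ω = ⨆ j, Ps n s E (exh n Ω j) := by
  have : (fun j => Ps n s E (exh n Ω j)) = fun j => nu n s (DD n E (exh n Ω j)) :=
    funext fun j => Ps_eq n s hE (exh_open n Ω j).measurableSet
  have h2 : DD n E Ω = ⋃ j, DD n E (exh n Ω j) := by
    conv_lhs => rw [← exh_iUnion n hΩ]
    exact DD_iUnion n E _
  rw [Ps_eq n s hE hΩ.measurableSet, this, h2,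
    Directed.measure_iUnion (Monotone.directed_le fun a b hab => DD_mono E (exh_mono n Ω hab))]

lemma trunc_sup (n : ℕ) (s : ℝ) {T : Set (V n × V n)} (hT : MeasurableSet T) :
    nu n s T
      = ⨆ M : ℕ, ∫⁻ p in T, min (ker n s p) M ∂((volume : Measure (V n)).prod volume) := by
  rw [nu, withDensity_apply _ hT]
  have hmono : Monotone fun (M : ℕ) (p : V n × V n) => min (ker n s p) M := by
    intro a b hab p
    exact min_le_min le_rfl (by exact_mod_cast hab)
  rw [← lintegral_iSup (fun M => (ker_meas n s).min measurable_const) hmono]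
  refine lintegral_congr fun p => ?_
  obtain ⟨M, hM⟩ := ENNReal.exists_nat_gt (ENNReal.ofReal_ne_top : ker n s p ≠ ⊤)
  exact le_antisymm (le_iSup_of_le M (le_min le_rfl hM.le)) (iSup_le fun M => min_le_left _ _)

lemma le_liminf_aux {a : ℝ≥0∞} {f e : ℕ → ℝ≥0∞}
    (h : ∀ k, a ≤ f k + e k) (he : Tendsto e atTop (𝓝 0)) :
    a ≤ liminf f atTop := by
  refine ENNReal.le_of_forall_pos_le_add fun ε hε _ => ?_
  have hev : ∀ᶠ k in atTop, e k < ε :=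
    he.eventually_lt_const (by exact_mod_cast ENNReal.coe_pos.mpr hε)
  have h2 : ∀ᶠ k in atTop, a - ε ≤ f k := by
    filter_upwards [hev] with k hk
    exact tsub_le_iff_right.mpr ((h k).trans (add_le_add_right hk.le _))
  exact tsub_le_iff_right.mp (le_liminf_of_le (by isBoundedDefault) h2)

lemma core (n : ℕ) (s : ℝ) {E : Set (V n)} (hE : MeasurableSet E)
    {Ω : Set (V n)} {Ωk : ℕ → Set (V n)} (hΩk : ∀ k, MeasurableSet (Ωk k))
    (hconv : LocConv n Ωk Ω)
    {Ω' : Set (V n)} (hΩ' : MeasurableSet Ω') (hb : IsBounded Ω') (hsub : Ω' ⊆ Ω) :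
    nu n s (DD n E Ω') ≤ liminf (fun k => nu n s (DD n E (Ωk k))) atTop := by
  have hstepA : nu n s (DD n E Ω')
      = ⨆ R : ℕ, nu n s (DD n E Ω' ∩ (ball (0:V n) R ×ˢ ball (0:V n) R)) := by
    have hQu : ⋃ R : ℕ, (ball (0 : V n) R ×ˢ ball (0 : V n) R) = univ := by
      ext ⟨x, y⟩
      simp only [mem_iUnion, mem_univ, iff_true, mem_prod, mem_ball_zero_iff]
      obtain ⟨R, hR⟩ := exists_nat_gt (max ‖x‖ ‖y‖)
      exact ⟨R, lt_of_le_of_lt (le_max_left _ _) hR, lt_of_le_of_lt (le_max_right _ _) hR⟩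
    rw [← Directed.measure_iUnion, ← inter_iUnion, hQu, inter_univ]
    exact Monotone.directed_le fun a b hab =>
      inter_subset_inter_right _
        (prod_mono (ball_subset_ball (by exact_mod_cast hab))
          (ball_subset_ball (by exact_mod_cast hab)))
  rw [hstepA]
  refine iSup_le fun R => ?_
  have hTm : MeasurableSet (DD n E Ω' ∩ (ball (0:V n) R ×ˢ ball (0:V n) R)) :=
    (DD_meas hE hΩ').inter (measurableSet_ball.prod measurableSet_ball)
  rw [trunc_sup n s hTm]
  refine iSup_le fun M => ?_
  set ρ : Measure (V n × V n) := (volume : Measure (V n)).prod volume with hρ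
  set g : V n × V n → ℝ≥0∞ := fun p => min (ker n s p) M with hg
  set B := ball (0 : V n) R with hB
  set W : ℕ → Set (V n) := fun k => Ω' \ Ωk k with hW
  have key : ∀ k, (∫⁻ p in DD n E Ω' ∩ (B ×ˢ B), g p ∂ρ)
      ≤ nu n s (DD n E (Ωk k)) + (M : ℝ≥0∞) * (volume B + volume B) * volume (W k) := by
    intro k
    have hincl : DD n E Ω' ∩ (B ×ˢ B)
        ⊆ DD n E (Ωk k ∩ Ω') ∪ ((W k ×ˢ B) ∪ (B ×ˢ W k)) := by
      rintro ⟨x, y⟩ ⟨⟨⟨hxE, hyE⟩, hor⟩, hxB, hyB⟩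
      by_cases hx : x ∈ Ωk k ∩ Ω'
      · exact Or.inl ⟨⟨hxE, hyE⟩, Or.inl ⟨hx, mem_univ _⟩⟩
      by_cases hy : y ∈ Ωk k ∩ Ω'
      · exact Or.inl ⟨⟨hxE, hyE⟩, Or.inr ⟨mem_univ _, hy⟩⟩
      rcases hor with ⟨hxΩ, -⟩ | ⟨-, hyΩ⟩
      · exact Or.inr (Or.inl ⟨⟨hxΩ, fun hk => hx ⟨hk, hxΩ⟩⟩, hyB⟩)
      · exact Or.inr (Or.inr ⟨hxB, ⟨hyΩ, fun hk => hy ⟨hk, hyΩ⟩⟩⟩)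
    have e1 : (∫⁻ p in DD n E (Ωk k ∩ Ω'), g p ∂ρ) ≤ nu n s (DD n E (Ωk k)) := by
      refine le_trans (lintegral_mono fun p => min_le_left _ _) ?_
      rw [← withDensity_apply _ (DD_meas hE ((hΩk k).inter hΩ'))]
      exact measure_mono (DD_mono E inter_subset_left)
    have e2 : (∫⁻ p in (W k ×ˢ B) ∪ (B ×ˢ W k), g p ∂ρ)
        ≤ (M : ℝ≥0∞) * (volume B + volume B) * volume (W k) := by
      refine le_trans (lintegral_mono fun p => min_le_right _ _) ?_
      rw [setLIntegral_const]
      calc (M : ℝ≥0∞) * ρ ((W k ×ˢ B) ∪ (B ×ˢ W k))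
          ≤ (M : ℝ≥0∞) * (ρ (W k ×ˢ B) + ρ (B ×ˢ W k)) := by
            exact mul_le_mul_right (measure_union_le _ _) _
        _ = (M : ℝ≥0∞) * (volume (W k) * volume B + volume B * volume (W k)) := by
            rw [hρ, Measure.prod_prod, Measure.prod_prod]
        _ = (M : ℝ≥0∞) * (volume B + volume B) * volume (W k) := by ring
    calc (∫⁻ p in DD n E Ω' ∩ (B ×ˢ B), g p ∂ρ)
        ≤ ∫⁻ p in DD n E (Ωk k ∩ Ω') ∪ ((W k ×ˢ B) ∪ (B ×ˢ W k)), g p ∂ρ :=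
          lintegral_mono_set hincl
      _ ≤ (∫⁻ p in DD n E (Ωk k ∩ Ω'), g p ∂ρ)
            + ∫⁻ p in (W k ×ˢ B) ∪ (B ×ˢ W k), g p ∂ρ := lintegral_union_le _ _ _
      _ ≤ nu n s (DD n E (Ωk k)) + (M : ℝ≥0∞) * (volume B + volume B) * volume (W k) :=
          add_le_add e1 e2
  have hWsub : ∀ k, W k ⊆ (Ωk k ∆ Ω) ∩ Ω' := by
    intro k x hx
    exact ⟨Or.inr ⟨hsub hx.1, hx.2⟩, hx.1⟩
  have hW0 : Tendsto (fun k => volume (W k)) atTop (𝓝 0) :=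
    tendsto_of_tendsto_of_tendsto_of_le_of_le tendsto_const_nhds (hconv Ω' hb)
      (fun k => zero_le) (fun k => measure_mono (hWsub k))
  have hconst : (M : ℝ≥0∞) * (volume B + volume B) ≠ ⊤ :=
    ENNReal.mul_ne_top (ENNReal.natCast_ne_top M)
      (ENNReal.add_ne_top.mpr ⟨measure_ball_lt_top.ne, measure_ball_lt_top.ne⟩)
  have he : Tendsto (fun k => (M : ℝ≥0∞) * (volume B + volume B) * volume (W k))
      atTop (𝓝 0) := by
    have := ENNReal.Tendsto.const_mul hW0 (Or.inr hconst)
    simpa [mul_assoc] using this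
  exact le_liminf_aux key he

lemma part1 (n : ℕ) (s : ℝ) {E Ω : Set (V n)} (hE : MeasurableSet E) (hΩ : IsOpen Ω)
    {Ωk : ℕ → Set (V n)} (hΩk : ∀ k, IsOpen (Ωk k)) (hconv : LocConv n Ωk Ω) :
    Ps n s E Ω ≤ liminf (fun k => Ps n s E (Ωk k)) atTop := by
  have heq : (fun k => Ps n s E (Ωk k)) = fun k => nu n s (DD n E (Ωk k)) :=
    funext fun k => Ps_eq n s hE (hΩk k).measurableSet
  rw [Ps_iSup_exh n s hE hΩ, heq]
  refine iSup_le fun j => ?_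
  rw [Ps_eq n s hE (exh_open n Ω j).measurableSet]
  exact core n s hE (fun k => (hΩk k).measurableSet) hconv
    (exh_open n Ω j).measurableSet (isBounded_ball.subset inter_subset_left)
    ((subset_closure).trans (exh_closure_subset n hΩ j))

end FracAux

open FracAux

/-- Proposition 2.8 and Remark 2.9: continuity of the `s`-perimeter along
approximations of the domain from within, and the representation of `Pₛ(E,Ω)` as the supremum
over compactly contained open subsets. -/
theorem fracPer_continuity_in_domain
    (n : ℕ) (hn : 1 ≤ n) (s : ℝ) (hs : s ∈ Set.Ioo (0 : ℝ) 1)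
    (Ω : Set (EuclideanSpace ℝ (Fin n))) (hΩ : IsOpen Ω)
    (Ωk : ℕ → Set (EuclideanSpace ℝ (Fin n))) (hΩk : ∀ k, IsOpen (Ωk k))
    (hconv : LocConv n Ωk Ω)
    (E : Set (EuclideanSpace ℝ (Fin n))) (hE : MeasurableSet E) :
    Ps n s E Ω ≤ Filter.liminf (fun k => Ps n s E (Ωk k)) atTop
    ∧ ((∀ k, Ωk k ⊆ Ω) →
        Tendsto (fun k => Ps n s E (Ωk k)) atTop (𝓝 (Ps n s E Ω)))
    ∧ Ps n s E Ω = ⨆ (Ω' : Set (EuclideanSpace ℝ (Fin n)))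
        (_ : IsOpen Ω') (_ : IsCompact (closure Ω')) (_ : closure Ω' ⊆ Ω),
          Ps n s E Ω' := by

  have hlim := part1 n s hE hΩ hΩk hconv
  refine ⟨hlim, ?_, ?_⟩
  · intro hsubk
    refine tendsto_of_le_liminf_of_limsup_le hlim ?_
    exact limsup_le_of_le (by isBoundedDefault)
      (Eventually.of_forall fun k =>
        Ps_mono n s hE (hΩk k).measurableSet hΩ.measurableSet (hsubk k))
  · apply le_antisymm
    · rw [Ps_iSup_exh n s hE hΩ]
      refine iSup_le fun j => ?_
      exact le_iSup_of_le (exh n Ω j) (le_iSup_of_le (exh_open n Ω j)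
        (le_iSup_of_le (exh_compact_closure n Ω j)
          (le_iSup_of_le (exh_closure_subset n hΩ j) le_rfl)))
    · refine iSup_le fun Ω' => iSup_le fun h1 => iSup_le fun h2 => iSup_le fun h3 => ?_
      exact Ps_mono n s hE h1.measurableSet hΩ.measurableSet (subset_closure.trans h3)
end

section
/- Let s ∈ (0,1) and let Ω ⊆ ℝ^n be an open set. If (E_h) is a sequence of measurable sets such that for every open Ω' ⊂⊂ Ω there is a constant c(Ω') < ∞ with limsup_{h→∞} P_s^L(E_h,Ω') ≤ c(Ω'), then there exist a subsequence (E_{h_i}) and a measurable set E ⊆ ℝ^n such that E_{h_i} ∩ Ω →loc E ∩ Ω. -/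
open MeasureTheory Set Filter Topology Metric Bornology
open scoped ENNReal NNReal symmDiff

namespace FracAux

/-! ### The `ℝ≥0∞` distance `D` -/

noncomputable def D (a b : ℝ≥0∞) : ℝ≥0∞ := (a - b) + (b - a)

lemma D_symm (a b : ℝ≥0∞) : D a b = D b a := add_comm _ _

lemma D_self (a : ℝ≥0∞) : D a a = 0 := by simp [D]

lemma D_triangle (a b c : ℝ≥0∞) : D a c ≤ D a b + D b c := by
  have h1 : a - c ≤ (a - b) + (b - c) := tsub_le_tsub_add_tsub
  have h2 : c - a ≤ (c - b) + (b - a) := tsub_le_tsub_add_tsub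
  calc D a c ≤ ((a - b) + (b - c)) + ((c - b) + (b - a)) := add_le_add h1 h2
    _ = D a b + D b c := by simp only [D]; ring

lemma D_le_two {a b : ℝ≥0∞} (ha : a ≤ 1) (hb : b ≤ 1) : D a b ≤ 2 :=
  calc D a b ≤ a + b := add_le_add tsub_le_self tsub_le_self
    _ ≤ 1 + 1 := add_le_add ha hb
    _ = 2 := one_add_one_eq_two

lemma D_one_left {b : ℝ≥0∞} (hb : b ≤ 1) : D 1 b = 1 - b := by
  simp [D, tsub_eq_zero_of_le hb]

lemma D_zero_left (b : ℝ≥0∞) : D 0 b = b := by simp [D, zero_tsub]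

lemma D_tendsto {ι : Type*} {l : Filter ι} {fa fb : ι → ℝ≥0∞} {a b : ℝ≥0∞}
    (hab : a ≠ ⊤ ∨ b ≠ ⊤) (ha : Tendsto fa l (𝓝 a)) (hb : Tendsto fb l (𝓝 b)) :
    Tendsto (fun i => D (fa i) (fb i)) l (𝓝 (D a b)) :=
  (ENNReal.Tendsto.sub ha hb hab).add (ENNReal.Tendsto.sub hb ha hab.symm)

lemma measurable_D {α : Type*} [MeasurableSpace α] {f g : α → ℝ≥0∞}
    (hf : Measurable f) (hg : Measurable g) : Measurable fun x => D (f x) (g x) :=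
  (hf.sub hg).add (hg.sub hf)

/-! ### Dyadic cubes -/

def cube (n k : ℕ) (z : Fin n → ℤ) : Set (EuclideanSpace ℝ (Fin n)) :=
  {x | ∀ i, (z i : ℝ) ≤ 2 ^ k * x i ∧ 2 ^ k * x i < (z i : ℝ) + 1}

noncomputable def zk (n k : ℕ) (x : EuclideanSpace ℝ (Fin n)) : Fin n → ℤ := fun i => ⌊2 ^ k * x i⌋

lemma zk_eq {n k : ℕ} {x : EuclideanSpace ℝ (Fin n)} {z : Fin n → ℤ}
    (h : x ∈ cube n k z) : zk n k x = z :=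
  funext fun i => Int.floor_eq_iff.mpr ⟨(h i).1, (h i).2⟩

lemma mem_cube_zk (n k : ℕ) (x : EuclideanSpace ℝ (Fin n)) : x ∈ cube n k (zk n k x) :=
  fun _ => ⟨Int.floor_le _, Int.lt_floor_add_one _⟩

lemma measurable_coord {n : ℕ} (i : Fin n) :
    Measurable fun x : EuclideanSpace ℝ (Fin n) => x i :=
  (measurable_pi_apply i).comp ((MeasurableEquiv.toLp 2 (Fin n → ℝ)).symm).measurable

lemma measurableSet_cube {n k : ℕ} {z : Fin n → ℤ} : MeasurableSet (cube n k z) := by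
  have : cube n k z = ⋂ i, (fun x : EuclideanSpace ℝ (Fin n) => 2 ^ k * x i) ⁻¹'
      (Ico ((z i : ℝ)) ((z i : ℝ) + 1)) := by
    ext x; simp [cube, Set.mem_iInter]
  rw [this]
  exact MeasurableSet.iInter fun i =>
    (((measurable_coord i).const_mul _)) measurableSet_Ico

lemma zk_measurable (n k : ℕ) : Measurable (zk n k) :=
  measurable_pi_lambda _ fun i => ((measurable_coord i).const_mul _).floor

lemma cube_disjoint {n k : ℕ} {z z' : Fin n → ℤ} (h : z ≠ z') :
    Disjoint (cube n k z) (cube n k z') :=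
  Set.disjoint_left.mpr fun _ hx hx' => h (by rw [← zk_eq hx, zk_eq hx'])

lemma cube_eq_preimage (n k : ℕ) (z : Fin n → ℤ) :
    cube n k z = ((MeasurableEquiv.toLp 2 (Fin n → ℝ)).symm) ⁻¹'
      (Set.univ.pi fun i => Ico ((z i : ℝ) / 2 ^ k) (((z i : ℝ) + 1) / 2 ^ k)) := by
  ext x
  simp only [cube, Set.mem_preimage, Set.mem_pi, Set.mem_univ, forall_true_left, Set.mem_Ico,
    Set.mem_setOf_eq, true_implies]
  refine forall_congr' fun i => ?_
  have hxi : ((MeasurableEquiv.toLp 2 (Fin n → ℝ)).symm) x i = x i := rfl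
  rw [hxi, div_le_iff₀' (by positivity : (0:ℝ) < 2 ^ k), lt_div_iff₀' (by positivity : (0:ℝ) < 2 ^ k)]

lemma volume_cube (n k : ℕ) (z : Fin n → ℤ) :
    volume (cube n k z) = (ENNReal.ofReal (((2:ℝ) ^ k)⁻¹)) ^ n := by
  rw [cube_eq_preimage,
    (EuclideanSpace.volume_preserving_symm_measurableEquiv_toLp (Fin n)).measure_preimage
      ((MeasurableSet.univ_pi fun i => measurableSet_Ico).nullMeasurableSet),
    volume_pi_pi]
  have h : ∀ i : Fin n, volume (Ico ((z i : ℝ) / 2 ^ k) (((z i : ℝ) + 1) / 2 ^ k))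
      = ENNReal.ofReal (((2:ℝ) ^ k)⁻¹) := by
    intro i
    rw [Real.volume_Ico]
    congr 1
    field_simp
    ring
  simp [h, Finset.prod_const]

lemma volume_cube_ne_zero (n k : ℕ) (z : Fin n → ℤ) : volume (cube n k z) ≠ 0 := by
  rw [volume_cube]
  exact pow_ne_zero _ (ENNReal.ofReal_pos.mpr (by positivity)).ne'

lemma volume_cube_ne_top (n k : ℕ) (z : Fin n → ℤ) : volume (cube n k z) ≠ ⊤ := by
  rw [volume_cube]
  exact ENNReal.pow_ne_top ENNReal.ofReal_ne_top

lemma dist_le_of_mem_cube {n k : ℕ} {z : Fin n → ℤ} {x y : EuclideanSpace ℝ (Fin n)}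
    (hx : x ∈ cube n k z) (hy : y ∈ cube n k z) :
    dist x y ≤ Real.sqrt n * ((2:ℝ) ^ k)⁻¹ := by
  have hp : (0:ℝ) < 2 ^ k := by positivity
  have hb : ∀ i, dist (x i) (y i) ^ 2 ≤ (((2:ℝ) ^ k)⁻¹) ^ 2 := by
    intro i
    have h1 := hx i; have h2 := hy i
    have habs : |x i - y i| ≤ ((2:ℝ) ^ k)⁻¹ := by
      rw [abs_le]
      constructor
      · rw [neg_le, ← neg_sub]
        rw [inv_eq_one_div, le_div_iff₀ hp]
        nlinarith [h1.1, h2.2]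
      · rw [inv_eq_one_div, le_div_iff₀ hp]
        nlinarith [h1.2, h2.1]
    rw [Real.dist_eq]
    have h0 : (0:ℝ) ≤ |x i - y i| := abs_nonneg _
    nlinarith [habs]
  rw [EuclideanSpace.dist_eq]
  have hsum : (∑ i, dist (x i) (y i) ^ 2) ≤ (n : ℝ) * (((2:ℝ) ^ k)⁻¹) ^ 2 := by
    calc (∑ i, dist (x i) (y i) ^ 2) ≤ (Finset.univ.card : ℕ) • ((((2:ℝ) ^ k)⁻¹) ^ 2) :=
          Finset.sum_le_card_nsmul _ _ _ fun i _ => hb i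
      _ = (n : ℝ) * (((2:ℝ) ^ k)⁻¹) ^ 2 := by
          simp [Finset.card_univ, nsmul_eq_mul]
  calc Real.sqrt (∑ i, dist (x i) (y i) ^ 2) ≤ Real.sqrt ((n : ℝ) * (((2:ℝ) ^ k)⁻¹) ^ 2) :=
        Real.sqrt_le_sqrt hsum
    _ = Real.sqrt n * ((2:ℝ) ^ k)⁻¹ := by
        rw [Real.sqrt_mul (by positivity), Real.sqrt_sq (by positivity)]

/-! ### Kernel estimates -/

lemma prod_le_ker {n : ℕ} (hn : 1 ≤ n) {p : ℝ} (hp : 0 < p)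
    {A B : Set (EuclideanSpace ℝ (Fin n))} (hB : MeasurableSet B) {R : ℝ} (hR : 0 < R)
    (hd : ∀ x ∈ A, ∀ y ∈ B, dist x y ≤ R) :
    volume A * volume B ≤
      ENNReal.ofReal (R ^ p) * ∫⁻ x in A, ∫⁻ y in B, ENNReal.ofReal (dist x y ^ (-p)) := by
  haveI : Nonempty (Fin n) := Fin.pos_iff_nonempty.mp hn
  have hker : Measurable fun q : (EuclideanSpace ℝ (Fin n)) × (EuclideanSpace ℝ (Fin n)) =>
      ENNReal.ofReal (dist q.1 q.2 ^ (-p)) := by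
    exact ENNReal.measurable_ofReal.comp
      ((by measurability : Measurable fun t : ℝ => t ^ (-p)).comp measurable_dist)
  have hinner : Measurable fun x => ∫⁻ y in B, ENNReal.ofReal (dist x y ^ (-p)) :=
    Measurable.lintegral_prod_right' hker
  have hpt : ∀ x ∈ A, volume B ≤
      ENNReal.ofReal (R ^ p) * ∫⁻ y in B, ENNReal.ofReal (dist x y ^ (-p)) := by
    intro x hx
    rw [← setLIntegral_one B, ← lintegral_const_mul' _ _ (ENNReal.ofReal_ne_top (r := R ^ p))]
    refine lintegral_mono_ae ?_
    have h1 : ∀ᵐ y ∂(volume.restrict B), y ∈ B := ae_restrict_mem hB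
    have h2 : ∀ᵐ y ∂(volume.restrict B), y ≠ x := by
      refine ae_iff.mpr ?_
      have hx0 : (volume.restrict B) {y | ¬ y ≠ x} ≤ volume {x} := by
        refine le_trans (measure_mono ?_) (Measure.le_iff'.mp Measure.restrict_le_self {x})
        intro y hy
        simpa using hy
      simpa [measure_singleton] using nonpos_iff_eq_zero.mp (by simpa [measure_singleton] using hx0)
    filter_upwards [h1, h2] with y hyB hyx
    have hdxy : dist x y ≤ R := hd x hx y hyB
    have hd0 : 0 < dist x y := dist_pos.mpr (Ne.symm hyx)
    have hle : R ^ (-p) ≤ dist x y ^ (-p) :=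
      Real.rpow_le_rpow_of_nonpos hd0 hdxy (neg_nonpos.mpr hp.le)
    calc (1:ℝ≥0∞) = ENNReal.ofReal (R ^ p * R ^ (-p)) := by
          rw [← Real.rpow_add hR, add_neg_cancel, Real.rpow_zero, ENNReal.ofReal_one]
      _ = ENNReal.ofReal (R ^ p) * ENNReal.ofReal (R ^ (-p)) :=
          ENNReal.ofReal_mul (Real.rpow_nonneg hR.le _)
      _ ≤ _ := mul_le_mul_right (ENNReal.ofReal_le_ofReal hle) _
  calc volume A * volume B = ∫⁻ _ in A, volume B := by rw [setLIntegral_const, mul_comm]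
    _ ≤ ∫⁻ x in A, ENNReal.ofReal (R ^ p) * ∫⁻ y in B, ENNReal.ofReal (dist x y ^ (-p)) :=
        setLIntegral_mono (measurable_const.mul hinner) hpt
    _ = _ := lintegral_const_mul' _ _ (ENNReal.ofReal_ne_top (r := R ^ p))

lemma rr_pow (s : ℝ) (k : ℕ) :
    ENNReal.ofReal ((((2:ℝ) ^ k)⁻¹) ^ s) = (ENNReal.ofReal ((2:ℝ) ^ (-s))) ^ k := by
  rw [← ENNReal.ofReal_pow (Real.rpow_nonneg (by norm_num) _)]
  congr 1
  have h1 : ((2:ℝ) ^ k)⁻¹ = (2:ℝ) ^ (-(k:ℝ)) := by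
    rw [← Real.rpow_natCast 2 k, ← Real.rpow_neg (by norm_num)]
  rw [h1, ← Real.rpow_natCast ((2:ℝ) ^ (-s)) k, ← Real.rpow_mul (by norm_num),
    ← Real.rpow_mul (by norm_num)]
  congr 1
  ring

lemma const_div_V {n : ℕ} {s : ℝ} (k : ℕ) (z : Fin n → ℤ) :
    2 * ENNReal.ofReal ((Real.sqrt n * ((2:ℝ) ^ k)⁻¹) ^ ((n:ℝ) + s)) / volume (cube n k z)
      = (2 * ENNReal.ofReal (Real.sqrt n ^ ((n:ℝ) + s))) * (ENNReal.ofReal ((2:ℝ) ^ (-s))) ^ k := by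
  have hδ : (0:ℝ) < ((2:ℝ) ^ k)⁻¹ := by positivity
  have hB0 : (ENNReal.ofReal (((2:ℝ) ^ k)⁻¹)) ^ n ≠ 0 :=
    pow_ne_zero _ (ENNReal.ofReal_pos.mpr hδ).ne'
  have hBt : (ENNReal.ofReal (((2:ℝ) ^ k)⁻¹)) ^ n ≠ ⊤ :=
    ENNReal.pow_ne_top ENNReal.ofReal_ne_top
  have h2 : (((2:ℝ) ^ k)⁻¹) ^ ((n:ℝ) + s) = (((2:ℝ) ^ k)⁻¹) ^ (n : ℕ) * (((2:ℝ) ^ k)⁻¹) ^ s := by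
    rw [Real.rpow_add hδ, Real.rpow_natCast]
  rw [volume_cube, Real.mul_rpow (Real.sqrt_nonneg _) hδ.le, h2,
    ENNReal.ofReal_mul (Real.rpow_nonneg (Real.sqrt_nonneg _) _),
    ENNReal.ofReal_mul (by positivity), ENNReal.ofReal_pow hδ.le, rr_pow]
  rw [eq_comm, ENNReal.eq_div_iff hB0 hBt]
  ring

lemma cube_integral_est {n : ℕ} (hn : 1 ≤ n) {s : ℝ} (hs0 : 0 < s) (k : ℕ) (z : Fin n → ℤ)
    {E : Set (EuclideanSpace ℝ (Fin n))} (hE : MeasurableSet E) :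
    ∫⁻ x in cube n k z,
        D (E.indicator 1 x) (volume (E ∩ cube n k z) / volume (cube n k z))
      ≤ 2 * ENNReal.ofReal ((Real.sqrt n * ((2:ℝ) ^ k)⁻¹) ^ ((n:ℝ) + s)) *
          Ls n s (E ∩ cube n k z) (Eᶜ ∩ cube n k z) / volume (cube n k z) := by
  have hp : (0:ℝ) < (n:ℝ) + s := add_pos_of_nonneg_of_pos (Nat.cast_nonneg n) hs0
  have hR : (0:ℝ) < Real.sqrt n * ((2:ℝ) ^ k)⁻¹ :=
    mul_pos (Real.sqrt_pos.mpr (by exact_mod_cast Nat.pos_of_ne_zero (by omega))) (by positivity)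
  set Q := cube n k z with hQ
  set V := volume Q with hV
  set m := volume (E ∩ Q) with hm
  have hV0 : V ≠ 0 := volume_cube_ne_zero n k z
  have hVt : V ≠ ⊤ := volume_cube_ne_top n k z
  have hm_le : m ≤ V := measure_mono inter_subset_right
  have hmt : m ≠ ⊤ := (lt_of_le_of_lt hm_le (lt_top_iff_ne_top.mpr hVt)).ne
  set a := m / V with ha
  have ha1 : a ≤ 1 := by
    rw [ha, ← ENNReal.div_self hV0 hVt]
    exact ENNReal.div_le_div_right hm_le _
  have h1 : ∫⁻ x in Q ∩ E, D (E.indicator 1 x) a = (1 - a) * m := by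
    rw [setLIntegral_congr_fun (measurableSet_cube.inter hE)
      (fun x hx => by
        simp only [Set.indicator_of_mem hx.2, Pi.one_apply]; rw [D_one_left ha1]), setLIntegral_const,
      Set.inter_comm Q E, ← hm]
  have h2 : ∫⁻ x in Q \ E, D (E.indicator 1 x) a = a * (V - m) := by
    have hdiff : volume (Q \ E) = V - m := by
      rw [← diff_self_inter,
        measure_diff inter_subset_left ((measurableSet_cube.inter hE).nullMeasurableSet)
          (by rwa [Set.inter_comm]), Set.inter_comm Q E, ← hm]
    rw [setLIntegral_congr_fun (measurableSet_cube.diff hE)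
      (fun x hx => by
        simp only [Set.indicator_of_notMem hx.2]; rw [D_zero_left]), setLIntegral_const, hdiff]
  have hsplit : ∫⁻ x in Q, D (E.indicator 1 x) a = (1 - a) * m + a * (V - m) := by
    rw [← lintegral_inter_add_diff _ Q hE, h1, h2]
  have h1a : (1:ℝ≥0∞) - a = (V - m) / V := by
    rw [ha, ENNReal.sub_div (fun _ _ => hV0), ENNReal.div_self hV0 hVt]
  have halg : (1 - a) * m + a * (V - m) = 2 * (m * (V - m)) / V := by
    rw [h1a, ha]
    simp only [div_eq_mul_inv]
    ring
  have hVm : V - m = volume (Eᶜ ∩ Q) := by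
    have hdiff : volume (Q \ E) = V - m := by
      rw [← diff_self_inter,
        measure_diff inter_subset_left ((measurableSet_cube.inter hE).nullMeasurableSet)
          (by rwa [Set.inter_comm]), Set.inter_comm Q E, ← hm]
    rw [← hdiff, Set.diff_eq_compl_inter]
  have hprod : m * (V - m) ≤
      ENNReal.ofReal ((Real.sqrt n * ((2:ℝ) ^ k)⁻¹) ^ ((n:ℝ) + s)) *
        Ls n s (E ∩ Q) (Eᶜ ∩ Q) := by
    rw [hVm, hm]
    exact prod_le_ker hn hp (hE.compl.inter measurableSet_cube) hR
      (fun x hx y hy => dist_le_of_mem_cube hx.2 hy.2)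
  calc ∫⁻ x in Q, D (E.indicator 1 x) a = 2 * (m * (V - m)) / V := by rw [hsplit, halg]
    _ ≤ 2 * (ENNReal.ofReal ((Real.sqrt n * ((2:ℝ) ^ k)⁻¹) ^ ((n:ℝ) + s)) *
          Ls n s (E ∩ Q) (Eᶜ ∩ Q)) / V := by gcongr
    _ = 2 * ENNReal.ofReal ((Real.sqrt n * ((2:ℝ) ^ k)⁻¹) ^ ((n:ℝ) + s)) *
          Ls n s (E ∩ Q) (Eᶜ ∩ Q) / V := by rw [mul_assoc]

lemma key_est {n : ℕ} (hn : 1 ≤ n) {s : ℝ} (hs0 : 0 < s)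
    {E Ω' S : Set (EuclideanSpace ℝ (Fin n))} (hE : MeasurableSet E) (k : ℕ)
    (hS : ∀ x ∈ S, cube n k (zk n k x) ⊆ Ω') :
    ∫⁻ x in S, D (E.indicator 1 x)
        (volume (E ∩ cube n k (zk n k x)) / volume (cube n k (zk n k x)))
      ≤ (2 * ENNReal.ofReal (Real.sqrt n ^ ((n:ℝ) + s))) * (ENNReal.ofReal ((2:ℝ) ^ (-s))) ^ k *
          Ls n s (E ∩ Ω') (Eᶜ ∩ Ω') := by
  classical
  set f : EuclideanSpace ℝ (Fin n) → ℝ≥0∞ := fun x => D (E.indicator 1 x)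
    (volume (E ∩ cube n k (zk n k x)) / volume (cube n k (zk n k x))) with hf
  set T := {z : Fin n → ℤ | cube n k z ⊆ Ω'} with hT
  set c := (2 * ENNReal.ofReal (Real.sqrt n ^ ((n:ℝ) + s))) *
    (ENNReal.ofReal ((2:ℝ) ^ (-s))) ^ k with hc
  set g : EuclideanSpace ℝ (Fin n) → ℝ≥0∞ :=
    fun x => ∫⁻ y in Eᶜ ∩ Ω', ENNReal.ofReal (dist x y ^ (-((n:ℝ) + s))) with hg
  have hsub : S ⊆ ⋃ z : T, cube n k z.1 := fun x hx =>
    Set.mem_iUnion.mpr ⟨⟨zk n k x, hS x hx⟩, mem_cube_zk n k x⟩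
  have hdisj : Pairwise (Function.onFun Disjoint fun z : T => cube n k z.1) :=
    fun z w hzw => cube_disjoint (Subtype.coe_injective.ne hzw)
  have hpercube : ∀ z : T, ∫⁻ x in cube n k z.1, f x
        ≤ c * Ls n s (E ∩ cube n k z.1) (Eᶜ ∩ cube n k z.1) := by
    intro z
    have hcongr : ∫⁻ x in cube n k z.1, f x
          = ∫⁻ x in cube n k z.1, D (E.indicator 1 x)
            (volume (E ∩ cube n k z.1) / volume (cube n k z.1)) :=
      setLIntegral_congr_fun measurableSet_cube (fun x hx => by
        rw [hf]; simp only; rw [zk_eq hx])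
    rw [hcongr]
    refine (cube_integral_est hn hs0 k z.1 hE).trans (le_of_eq ?_)
    rw [hc, ← const_div_V (s := s) k z.1]
    simp only [div_eq_mul_inv]
    ring
  have hsum_le : ∑' z : T, Ls n s (E ∩ cube n k z.1) (Eᶜ ∩ cube n k z.1)
      ≤ Ls n s (E ∩ Ω') (Eᶜ ∩ Ω') := by
    have hLz : ∀ z : T, Ls n s (E ∩ cube n k z.1) (Eᶜ ∩ cube n k z.1)
        ≤ ∫⁻ x in E ∩ cube n k z.1, g x := fun z =>
      lintegral_mono fun x => lintegral_mono_set (Set.inter_subset_inter_right _ z.2)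
    calc ∑' z : T, Ls n s (E ∩ cube n k z.1) (Eᶜ ∩ cube n k z.1)
        ≤ ∑' z : T, ∫⁻ x in E ∩ cube n k z.1, g x := ENNReal.tsum_le_tsum hLz
      _ = ∫⁻ x in ⋃ z : T, E ∩ cube n k z.1, g x :=
          (lintegral_iUnion (fun z => hE.inter measurableSet_cube)
            (fun z w hzw => ((cube_disjoint (Subtype.coe_injective.ne hzw)).mono
              inter_subset_right inter_subset_right)) g).symm
      _ ≤ ∫⁻ x in E ∩ Ω', g x :=
          lintegral_mono_set (Set.iUnion_subset fun z => Set.inter_subset_inter_right _ z.2)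
      _ = Ls n s (E ∩ Ω') (Eᶜ ∩ Ω') := rfl
  calc ∫⁻ x in S, f x
      ≤ ∫⁻ x in ⋃ z : T, cube n k z.1, f x := lintegral_mono_set hsub
    _ = ∑' z : T, ∫⁻ x in cube n k z.1, f x :=
        lintegral_iUnion (fun _ => measurableSet_cube) hdisj f
    _ ≤ ∑' z : T, c * Ls n s (E ∩ cube n k z.1) (Eᶜ ∩ cube n k z.1) :=
        ENNReal.tsum_le_tsum hpercube
    _ = c * ∑' z : T, Ls n s (E ∩ cube n k z.1) (Eᶜ ∩ cube n k z.1) := ENNReal.tsum_mul_left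
    _ ≤ c * Ls n s (E ∩ Ω') (Eᶜ ∩ Ω') := mul_le_mul_right hsum_le _

/-! ### A convergence helper for `ℝ≥0∞`-valued sequences -/

lemma tendsto_limsup_of_D (u : ℕ → ℝ≥0∞) (hu : ∀ k, u k ≤ 1)
    (h : ∑' k, D (u k) (u (k + 1)) ≠ ⊤) :
    Tendsto u atTop (𝓝 (limsup u atTop)) := by
  have hut : ∀ k, u k ≠ ⊤ := fun k => ne_top_of_le_ne_top ENNReal.one_ne_top (hu k)
  have hd : ∀ k, dist ((u k).toReal) ((u (k + 1)).toReal) ≤ (D (u k) (u (k + 1))).toReal := by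
    intro k
    have hD : D (u k) (u (k + 1)) ≠ ⊤ :=
      ne_top_of_le_ne_top ENNReal.ofNat_ne_top (D_le_two (hu k) (hu (k + 1)))
    rw [Real.dist_eq]
    rcases le_total (u k) (u (k + 1)) with hle | hle
    · rw [abs_of_nonpos (by
        simpa using sub_nonpos.mpr (ENNReal.toReal_mono (hut _) hle)), neg_sub,
        ← ENNReal.toReal_sub_of_le hle (hut _)]
      exact ENNReal.toReal_mono hD le_add_self
    · rw [abs_of_nonneg (sub_nonneg.mpr (ENNReal.toReal_mono (hut _) hle)),
        ← ENNReal.toReal_sub_of_le hle (hut _)]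
      exact ENNReal.toReal_mono hD le_self_add
  have hsum : Summable fun k => (D (u k) (u (k + 1))).toReal := ENNReal.summable_toReal h
  obtain ⟨L, hL⟩ := cauchySeq_tendsto_of_complete
    (cauchySeq_of_dist_le_of_summable _ hd hsum)
  have htend : Tendsto u atTop (𝓝 (ENNReal.ofReal L)) := by
    have := (ENNReal.continuous_ofReal.tendsto L).comp hL
    refine this.congr fun k => ENNReal.ofReal_toReal (hut k)
  rw [htend.limsup_eq]
  exact htend


end FracAux

open FracAux in
/-- Proposition 2.12, compactness: a sequence of sets whose local fractional
perimeters are asymptotically bounded in every compactly contained open subset of `Ω` admits a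
subsequence converging locally in measure inside `Ω`. -/
theorem fracPer_compactness
    (n : ℕ) (hn : 1 ≤ n) (s : ℝ) (hs : s ∈ Set.Ioo (0 : ℝ) 1)
    (Ω : Set (EuclideanSpace ℝ (Fin n))) (hΩ : IsOpen Ω)
    (Eh : ℕ → Set (EuclideanSpace ℝ (Fin n))) (hEh : ∀ h, MeasurableSet (Eh h))
    (hbd : ∀ Ω' : Set (EuclideanSpace ℝ (Fin n)), IsOpen Ω' → IsCompact (closure Ω') →
      closure Ω' ⊆ Ω → ∃ c : ℝ≥0∞, c < ⊤ ∧
        Filter.limsup (fun h => PsL n s (Eh h) Ω') atTop ≤ c) :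
    ∃ (φ : ℕ → ℕ), StrictMono φ ∧
      ∃ E : Set (EuclideanSpace ℝ (Fin n)), MeasurableSet E ∧
        LocConv n (fun i => Eh (φ i) ∩ Ω) (E ∩ Ω) := by
  classical
  obtain ⟨hs0, hs1⟩ := hs
  -- exhaustion of Ω by compact sets
  set Km : ℕ → Set (EuclideanSpace ℝ (Fin n)) := fun m =>
    Metric.closedBall 0 (m + 1) ∩ {x | (1 : ℝ≥0∞) / (m + 1) ≤ EMetric.infEdist x Ωᶜ} with hKmdef
  have hKm_closed : ∀ m, IsClosed (Km m) := fun m =>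
    Metric.isClosed_closedBall.inter (isClosed_le continuous_const EMetric.continuous_infEdist)
  have hKm_compact : ∀ m, IsCompact (Km m) :=
    fun m => (isCompact_closedBall (0 : EuclideanSpace ℝ (Fin n)) (m + 1)).of_isClosed_subset
      (hKm_closed m) inter_subset_left
  have hKm_sub : ∀ m, Km m ⊆ Ω := by
    intro m x hx
    by_contra hxΩ
    have h0 : EMetric.infEdist x Ωᶜ = 0 := EMetric.infEdist_zero_of_mem hxΩ
    have h2 := hx.2
    rw [Set.mem_setOf_eq, h0, le_zero_iff] at h2
    have hpos : (0:ℝ≥0∞) < 1 / ((m : ℝ≥0∞) + 1) :=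
      ENNReal.div_pos one_ne_zero
        (ENNReal.add_ne_top.mpr ⟨ENNReal.natCast_ne_top m, ENNReal.one_ne_top⟩)
    rw [h2] at hpos
    exact lt_irrefl _ hpos
  have hKm_mono : Monotone Km := by
    intro m m' hmm x hx
    refine ⟨Metric.closedBall_subset_closedBall (by exact_mod_cast by omega) hx.1,
      le_trans (ENNReal.div_le_div_left ?_ 1) hx.2⟩
    exact add_le_add_left (by exact_mod_cast hmm) 1
  have hKm_cover : Ω ⊆ ⋃ m, Km m := by
    intro x hx
    have hpos : 0 < EMetric.infEdist x Ωᶜ := by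
      exact EMetric.infEdist_pos_iff_notMem_closure.2
        (by rw [hΩ.isClosed_compl.closure_eq]; simpa using hx)
    obtain ⟨j, hj⟩ := ENNReal.exists_inv_nat_lt hpos.ne'
    refine Set.mem_iUnion.mpr ⟨max j ⌈‖x‖⌉₊, ⟨?_, ?_⟩⟩
    · have h1 : ‖x‖ ≤ (⌈‖x‖⌉₊ : ℝ) := Nat.le_ceil _
      have h2 : (⌈‖x‖⌉₊ : ℝ) ≤ ((max j ⌈‖x‖⌉₊ : ℕ) : ℝ) := by
        exact_mod_cast le_max_right j ⌈‖x‖⌉₊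
      refine Metric.mem_closedBall.mpr ?_
      rw [dist_zero_right]
      push_cast
      push_cast at h2
      linarith
    · refine le_trans ?_ hj.le
      rw [one_div]
      refine ENNReal.inv_le_inv.mpr ?_
      have h3 : (j : ℝ≥0∞) ≤ ((max j ⌈‖x‖⌉₊ : ℕ) : ℝ≥0∞) := by exact_mod_cast le_max_left _ _
      exact h3.trans le_self_add
  -- compactly contained open neighborhoods of the exhaustion
  have hexists : ∀ m, ∃ U : Set (EuclideanSpace ℝ (Fin n)), IsOpen U ∧ Km m ⊆ U ∧
      IsCompact (closure U) ∧ closure U ⊆ Ω := by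
    intro m
    obtain ⟨L, hLc, hKL, hLΩ⟩ := exists_compact_between (hKm_compact m) hΩ (hKm_sub m)
    exact ⟨interior L, isOpen_interior, hKL,
      IsCompact.of_isClosed_subset hLc isClosed_closure
        (closure_minimal interior_subset hLc.isClosed),
      (closure_minimal interior_subset hLc.isClosed).trans hLΩ⟩
  choose Om hOm_open hOm_sub hOm_cpt hOm_cl using hexists
  choose c hc_lt hc_limsup using fun m => hbd (Om m) (hOm_open m) (hOm_cpt m) (hOm_cl m)
  choose r hr_pos hr_sub using fun m =>
    (hKm_compact m).exists_thickening_subset_open (hOm_open m) (hOm_sub m)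
  have hδ_to_zero : Tendsto (fun k : ℕ => Real.sqrt n * ((2:ℝ) ^ k)⁻¹) atTop (𝓝 0) := by
    have h1 : Tendsto (fun k : ℕ => ((2:ℝ) ^ k)) atTop atTop :=
      tendsto_pow_atTop_atTop_of_one_lt (by norm_num)
    have h2 := tendsto_inv_atTop_zero.comp h1
    have h3 := h2.const_mul (Real.sqrt n)
    simpa using h3
  have hk0' : ∀ m, ∃ k0, ∀ k ≥ k0, Real.sqrt n * ((2:ℝ) ^ k)⁻¹ < r m := fun m =>
    eventually_atTop.mp (hδ_to_zero.eventually_lt_const (hr_pos m))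
  choose k0 hk0 using hk0'
  -- subsequence via compactness of the product space
  obtain ⟨ν, -, φ, hφ, hconv⟩ := IsCompact.tendsto_subseq
    (x := fun h => (fun p : ℕ × (Fin n → ℤ) => volume (Eh h ∩ cube n p.1 p.2)))
    isCompact_univ (fun _ => Set.mem_univ _)
  have hν : ∀ k (z : Fin n → ℤ),
      Tendsto (fun i => volume (Eh (φ i) ∩ cube n k z)) atTop (𝓝 (ν (k, z))) :=
    fun k z => tendsto_pi_nhds.mp hconv (k, z)
  -- densities
  set G : ℕ → EuclideanSpace ℝ (Fin n) → ℝ≥0∞ :=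
    fun k x => ν (k, zk n k x) / volume (cube n k (zk n k x)) with hGdef
  set F : ℕ → ℕ → EuclideanSpace ℝ (Fin n) → ℝ≥0∞ := fun i k x =>
    volume (Eh (φ i) ∩ cube n k (zk n k x)) / volume (cube n k (zk n k x)) with hFdef
  set χ : ℕ → EuclideanSpace ℝ (Fin n) → ℝ≥0∞ :=
    fun i => (Eh (φ i)).indicator 1 with hχdef
  have measG : ∀ k, Measurable (G k) := fun k =>
    (measurable_of_countable (fun z : Fin n → ℤ => ν (k, z) / volume (cube n k z))).comp
      (zk_measurable n k)
  have measF : ∀ i k, Measurable (F i k) := fun i k =>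
    (measurable_of_countable (fun z : Fin n → ℤ =>
      volume (Eh (φ i) ∩ cube n k z) / volume (cube n k z))).comp (zk_measurable n k)
  have measχ : ∀ i, Measurable (χ i) := fun i => measurable_one.indicator (hEh (φ i))
  have hν_le : ∀ k z, ν (k, z) ≤ volume (cube n k z) := fun k z =>
    le_of_tendsto (hν k z) (Eventually.of_forall fun i => measure_mono inter_subset_right)
  have div_le_one : ∀ {a b : ℝ≥0∞}, a ≤ b → b ≠ 0 → b ≠ ⊤ → a / b ≤ 1 := by
    intro a b h h0 ht
    rw [← ENNReal.div_self h0 ht]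
    exact ENNReal.div_le_div_right h _
  have hG1 : ∀ k x, G k x ≤ 1 := fun k x =>
    div_le_one (hν_le _ _) (volume_cube_ne_zero _ _ _) (volume_cube_ne_top _ _ _)
  have hF1 : ∀ i k x, F i k x ≤ 1 := fun i k x =>
    div_le_one (measure_mono inter_subset_right) (volume_cube_ne_zero _ _ _)
      (volume_cube_ne_top _ _ _)
  set l : EuclideanSpace ℝ (Fin n) → ℝ≥0∞ := fun x => limsup (fun k => G k x) atTop with hldef
  have measl : Measurable l := Measurable.limsup measG
  have hl1 : ∀ x, l x ≤ 1 := fun x =>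
    limsup_le_of_le (by isBoundedDefault) (Eventually.of_forall fun k => hG1 k x)
  set E : Set (EuclideanSpace ℝ (Fin n)) := {x | 1/2 < l x} with hEdef
  have hEmeas : MeasurableSet E := measurableSet_lt measurable_const measl
  refine ⟨φ, hφ, E, hEmeas, ?_⟩
  intro K hK
  have hFG : ∀ k x, Tendsto (fun i => F i k x) atTop (𝓝 (G k x)) := fun k x =>
    ENNReal.Tendsto.div_const (hν k (zk n k x)) (Or.inr (volume_cube_ne_zero _ _ _))
  -- constants
  set Cns : ℝ≥0∞ := 2 * ENNReal.ofReal (Real.sqrt n ^ ((n:ℝ) + s)) with hCnsdef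
  set rr : ℝ≥0∞ := ENNReal.ofReal ((2:ℝ) ^ (-s)) with hrrdef
  set CC : ℕ → ℝ≥0∞ := fun k => Cns * rr ^ k with hCCdef
  have hrr_lt1 : rr < 1 := ENNReal.ofReal_lt_one.mpr
    (Real.rpow_lt_one_of_one_lt_of_neg one_lt_two (neg_lt_zero.mpr hs0))
  have hCns_ne_top : Cns ≠ ⊤ := ENNReal.mul_ne_top ENNReal.ofNat_ne_top ENNReal.ofReal_ne_top
  have hCC0 : Tendsto CC atTop (𝓝 0) := by
    have h := ENNReal.Tendsto.const_mul (a := Cns)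
      (ENNReal.tendsto_pow_atTop_nhds_zero_of_lt_one hrr_lt1) (Or.inr hCns_ne_top)
    simpa using h
  have hc1_ne_top : ∀ m, c m + 1 ≠ ⊤ := fun m =>
    ENNReal.add_ne_top.mpr ⟨(hc_lt m).ne, ENNReal.one_ne_top⟩
  -- Term 1 : the key estimate
  have hT1 : ∀ m i k, k0 m ≤ k →
      ∫⁻ x in Km m, D (χ i x) (F i k x) ≤ CC k * PsL n s (Eh (φ i)) (Om m) := by
    intro m i k hk
    have hS : ∀ x ∈ Km m, cube n k (zk n k x) ⊆ Om m := by
      intro x hx y hy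
      refine hr_sub m (Metric.mem_thickening_iff.mpr ⟨x, hx, ?_⟩)
      calc dist y x ≤ Real.sqrt n * ((2:ℝ) ^ k)⁻¹ :=
            dist_le_of_mem_cube hy (mem_cube_zk n k x)
        _ < r m := hk0 m k hk
    have h := key_est hn hs0 (hEh (φ i)) k hS
    calc ∫⁻ x in Km m, D (χ i x) (F i k x)
        ≤ (2 * ENNReal.ofReal (Real.sqrt n ^ ((n:ℝ) + s))) *
            (ENNReal.ofReal ((2:ℝ) ^ (-s))) ^ k *
              Ls n s (Eh (φ i) ∩ Om m) ((Eh (φ i))ᶜ ∩ Om m) := h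
      _ = CC k * PsL n s (Eh (φ i)) (Om m) := rfl
  have hPsL : ∀ m, ∀ᶠ i in atTop, PsL n s (Eh (φ i)) (Om m) ≤ c m + 1 := by
    intro m
    have hev : ∀ᶠ h in atTop, PsL n s (Eh h) (Om m) < c m + 1 :=
      eventually_lt_of_limsup_lt
        (lt_of_le_of_lt (hc_limsup m) (ENNReal.lt_add_right (hc_lt m).ne one_ne_zero))
    exact (hφ.tendsto_atTop.eventually hev).mono fun i hi => hi.le
  -- Term 2 : F → G in L¹ on compacts
  have hT2 : ∀ m k, Tendsto (fun i => ∫⁻ x in Km m, D (F i k x) (G k x)) atTop (𝓝 0) := by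
    intro m k
    have hDCT := tendsto_lintegral_of_dominated_convergence (μ := volume.restrict (Km m))
      (F := fun i x => D (F i k x) (G k x)) (f := fun _ => 0) (bound := fun _ => 2)
      (fun i => measurable_D (measF i k) (measG k))
      (fun i => Eventually.of_forall fun x => D_le_two (hF1 i k x) (hG1 k x))
      (by
        rw [lintegral_const, Measure.restrict_apply_univ]
        exact ENNReal.mul_ne_top ENNReal.ofNat_ne_top (hKm_compact m).measure_lt_top.ne)
      (Eventually.of_forall fun x => by
        have h := D_tendsto (fa := fun i => F i k x) (fb := fun _ => G k x)
          (Or.inl (ne_top_of_le_ne_top ENNReal.one_ne_top (hG1 k x)))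
          (hFG k x) tendsto_const_nhds
        rw [D_self] at h
        exact h)
    simpa using hDCT
  -- Cauchy estimate for G
  have hCauchyGG : ∀ m k j, k0 m ≤ k → k0 m ≤ j →
      ∫⁻ x in Km m, D (G k x) (G j x) ≤ (CC k + CC j) * (c m + 1) := by
    intro m k j hk hj
    have hpt : ∀ x, D (G k x) (G j x) = liminf (fun i => D (F i k x) (F i j x)) atTop :=
      fun x => ((D_tendsto (Or.inl (ne_top_of_le_ne_top ENNReal.one_ne_top (hG1 k x)))
        (hFG k x) (hFG j x)).liminf_eq).symm
    calc ∫⁻ x in Km m, D (G k x) (G j x)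
        = ∫⁻ x in Km m, liminf (fun i => D (F i k x) (F i j x)) atTop :=
          lintegral_congr fun x => hpt x
      _ ≤ liminf (fun i => ∫⁻ x in Km m, D (F i k x) (F i j x)) atTop :=
          lintegral_liminf_le fun i => measurable_D (measF i k) (measF i j)
      _ ≤ (CC k + CC j) * (c m + 1) := by
          refine liminf_le_of_frequently_le' (((hPsL m).mono fun i hi => ?_).frequently)
          calc ∫⁻ x in Km m, D (F i k x) (F i j x)
              ≤ ∫⁻ x in Km m, (D (F i k x) (χ i x) + D (χ i x) (F i j x)) :=
                lintegral_mono fun x => D_triangle _ _ _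
            _ = (∫⁻ x in Km m, D (F i k x) (χ i x)) + ∫⁻ x in Km m, D (χ i x) (F i j x) :=
                lintegral_add_left (measurable_D (measF i k) (measχ i)) _
            _ ≤ CC k * PsL n s (Eh (φ i)) (Om m) + CC j * PsL n s (Eh (φ i)) (Om m) := by
                refine add_le_add ?_ (hT1 m i j hj)
                calc ∫⁻ x in Km m, D (F i k x) (χ i x)
                    = ∫⁻ x in Km m, D (χ i x) (F i k x) := by simp_rw [D_symm]
                  _ ≤ _ := hT1 m i k hk
            _ = (CC k + CC j) * PsL n s (Eh (φ i)) (Om m) := by ring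
            _ ≤ (CC k + CC j) * (c m + 1) := mul_le_mul_right hi _
  -- summability of the dyadic increments
  have hSumG : ∀ m, ∫⁻ x in Km m, ∑' kk, D (G kk x) (G (kk + 1) x) ≠ ⊤ := by
    intro m
    rw [lintegral_tsum fun kk => (measurable_D (measG kk) (measG (kk + 1))).aemeasurable]
    set b1 : ℕ → ℝ≥0∞ := fun kk => if kk < k0 m then 2 * volume (Km m) else 0 with hb1def
    have hbound : ∀ kk, ∫⁻ x in Km m, D (G kk x) (G (kk + 1) x)
        ≤ b1 kk + (CC kk + CC (kk + 1)) * (c m + 1) := by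
      intro kk
      by_cases hlt : kk < k0 m
      · refine le_trans ?_ le_self_add
        simp only [hb1def, if_pos hlt]
        calc ∫⁻ x in Km m, D (G kk x) (G (kk + 1) x) ≤ ∫⁻ _ in Km m, 2 :=
              setLIntegral_mono measurable_const fun x _ => D_le_two (hG1 _ x) (hG1 _ x)
          _ = 2 * volume (Km m) := setLIntegral_const _ _
      · push_neg at hlt
        have hb0 : b1 kk = 0 := by
          simp only [hb1def]
          rw [if_neg (not_lt.mpr hlt)]
        rw [hb0, zero_add]
        exact hCauchyGG m kk (kk + 1) hlt (hlt.trans (Nat.le_succ _))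
    have hCCsum : ∑' kk, CC kk ≠ ⊤ := by
      have : ∑' kk, CC kk = Cns * ∑' kk : ℕ, rr ^ kk := by
        rw [← ENNReal.tsum_mul_left]
      rw [this, ENNReal.tsum_geometric]
      exact ENNReal.mul_ne_top hCns_ne_top
        (ENNReal.inv_ne_top.mpr (tsub_pos_of_lt hrr_lt1).ne')
    have hfin1 : ∑' kk, b1 kk ≠ ⊤ := by
      rw [tsum_eq_sum (s := Finset.range (k0 m)) (fun kk hkk => by
        simp only [hb1def]; rw [if_neg (by simpa using hkk)])]
      refine (ENNReal.sum_lt_top.mpr fun kk _ => ?_).ne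
      simp only [hb1def]
      split
      · exact ENNReal.mul_lt_top ENNReal.ofNat_lt_top (hKm_compact m).measure_lt_top
      · exact ENNReal.zero_lt_top
    have hfin2 : ∑' kk, (CC kk + CC (kk + 1)) * (c m + 1) ≠ ⊤ := by
      rw [ENNReal.tsum_mul_right]
      refine ENNReal.mul_ne_top ?_ (hc1_ne_top m)
      rw [ENNReal.tsum_add]
      refine ENNReal.add_ne_top.mpr ⟨hCCsum, ?_⟩
      refine ne_top_of_le_ne_top hCCsum (ENNReal.tsum_le_tsum fun kk => ?_)
      exact mul_le_mul_right (pow_le_pow_of_le_one zero_le hrr_lt1.le (Nat.le_succ _)) _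
    refine ne_top_of_le_ne_top ?_ (ENNReal.tsum_le_tsum hbound)
    rw [ENNReal.tsum_add]
    exact ENNReal.add_ne_top.mpr ⟨hfin1, hfin2⟩
  have hae : ∀ m, ∀ᵐ x ∂(volume.restrict (Km m)),
      Tendsto (fun k => G k x) atTop (𝓝 (l x)) := by
    intro m
    filter_upwards [ae_lt_top (Measurable.ennreal_tsum fun kk =>
      measurable_D (measG kk) (measG (kk + 1))) (hSumG m)] with x hx
    exact tendsto_limsup_of_D (fun k => G k x) (fun k => hG1 k x) hx.ne
  -- Term 3 : G → l in L¹ on compacts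
  have hT3 : ∀ m, Tendsto (fun k => ∫⁻ x in Km m, D (G k x) (l x)) atTop (𝓝 0) := by
    intro m
    have hDCT := tendsto_lintegral_of_dominated_convergence (μ := volume.restrict (Km m))
      (F := fun k x => D (G k x) (l x)) (f := fun _ => 0) (bound := fun _ => 2)
      (fun k => measurable_D (measG k) measl)
      (fun k => Eventually.of_forall fun x => D_le_two (hG1 k x) (hl1 x))
      (by
        rw [lintegral_const, Measure.restrict_apply_univ]
        exact ENNReal.mul_ne_top ENNReal.ofNat_ne_top (hKm_compact m).measure_lt_top.ne)
      ((hae m).mono fun x hx => by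
        have h := D_tendsto (fa := fun k => G k x) (fb := fun _ => l x)
          (Or.inr (ne_top_of_le_ne_top ENNReal.one_ne_top (hl1 x)))
          hx tendsto_const_nhds
        rw [D_self] at h
        exact h)
    simpa using hDCT
  -- final ε-argument
  rw [ENNReal.tendsto_atTop_zero]
  intro ε hε
  set η := ε / 2 / 2 / 2 with hηdef
  have hη0 : 0 < η :=
    ENNReal.half_pos (ENNReal.half_pos (ENNReal.half_pos hε.ne').ne').ne'
  have htail : Tendsto (fun m => volume ((Ω ∩ closure K) \ Km m)) atTop (𝓝 0) := by
    have hcl : IsCompact (closure K) := hK.isCompact_closure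
    have h1 : Tendsto (fun m => volume ((Ω ∩ closure K) \ Km m)) atTop
        (𝓝 (volume (⋂ m, (Ω ∩ closure K) \ Km m))) := by
      refine tendsto_measure_iInter_atTop
        (fun m => ((hΩ.measurableSet.inter isClosed_closure.measurableSet).diff
          (hKm_closed m).measurableSet).nullMeasurableSet)
        (fun m m' hmm => Set.diff_subset_diff Set.Subset.rfl (hKm_mono hmm)) ⟨0, ?_⟩
      exact (lt_of_le_of_lt (measure_mono (Set.diff_subset.trans inter_subset_right))
        hcl.measure_lt_top).ne
    have hempty : (⋂ m, (Ω ∩ closure K) \ Km m) = ∅ := by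
      rw [Set.eq_empty_iff_forall_notMem]
      intro x hx
      have hx0 := Set.mem_iInter.mp hx 0
      obtain ⟨m, hm⟩ := Set.mem_iUnion.mp (hKm_cover hx0.1.1)
      exact (Set.mem_iInter.mp hx m).2 hm
    rwa [hempty, measure_empty] at h1
  obtain ⟨m, hm⟩ := (htail.eventually_lt_const (ENNReal.half_pos hε.ne')).exists
  have hk_ev : ∀ᶠ k in atTop, k0 m ≤ k ∧ 2 * (CC k * (c m + 1)) < η ∧
      2 * ∫⁻ x in Km m, D (G k x) (l x) < η := by
    have e2 : Tendsto (fun k => 2 * (CC k * (c m + 1))) atTop (𝓝 0) := by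
      have h := ENNReal.Tendsto.mul_const hCC0 (Or.inr (hc1_ne_top m))
      have h2 := ENNReal.Tendsto.const_mul (a := 2)
        (by simpa using h : Tendsto (fun k => CC k * (c m + 1)) atTop (𝓝 0))
        (Or.inr ENNReal.ofNat_ne_top)
      simpa using h2
    have e3 : Tendsto (fun k => 2 * ∫⁻ x in Km m, D (G k x) (l x)) atTop (𝓝 0) := by
      have h2 := ENNReal.Tendsto.const_mul (a := 2) (hT3 m) (Or.inr ENNReal.ofNat_ne_top)
      simpa using h2
    filter_upwards [eventually_ge_atTop (k0 m), e2.eventually_lt_const hη0,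
      e3.eventually_lt_const hη0] with k h1 h2 h3
    exact ⟨h1, h2, h3⟩
  obtain ⟨k, hk1, hk2, hk3⟩ := hk_ev.exists
  have hev_i : ∀ᶠ i in atTop, PsL n s (Eh (φ i)) (Om m) ≤ c m + 1 ∧
      2 * ∫⁻ x in Km m, D (F i k x) (G k x) < η := by
    have e4 : Tendsto (fun i => 2 * ∫⁻ x in Km m, D (F i k x) (G k x)) atTop (𝓝 0) := by
      have h2 := ENNReal.Tendsto.const_mul (a := 2) (hT2 m k) (Or.inr ENNReal.ofNat_ne_top)
      simpa using h2
    filter_upwards [hPsL m, e4.eventually_lt_const hη0] with i h1 h2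
    exact ⟨h1, h2⟩
  obtain ⟨N, hN⟩ := eventually_atTop.mp hev_i
  refine ⟨N, fun i hi => ?_⟩
  obtain ⟨hi1, hi2⟩ := hN i hi
  show volume (((Eh (φ i) ∩ Ω) ∆ (E ∩ Ω)) ∩ K) ≤ ε
  set Δ := (Eh (φ i)) ∆ E with hΔdef
  have hΔmeas : MeasurableSet Δ := (hEh (φ i)).symmDiff hEmeas
  have hset : ((Eh (φ i) ∩ Ω) ∆ (E ∩ Ω)) ∩ K ⊆
      (Δ ∩ Km m) ∪ ((Ω ∩ closure K) \ Km m) := by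
    intro x hx
    have hx1 : x ∈ (Eh (φ i) ∆ E) ∩ Ω := by
      have h := hx.1
      rwa [← Set.inter_symmDiff_distrib_right] at h
    by_cases hxm : x ∈ Km m
    · exact Or.inl ⟨hx1.1, hxm⟩
    · exact Or.inr ⟨⟨hx1.2, subset_closure hx.2⟩, hxm⟩
  have hhalf : (1:ℝ≥0∞) - 1/2 = 1/2 := by
    have := ENNReal.sub_half (a := 1) ENNReal.one_ne_top
    simpa using this
  have htwohalf : (2:ℝ≥0∞) * (1/2) = 1 := by
    rw [one_div, ENNReal.mul_inv_cancel two_ne_zero ENNReal.ofNat_ne_top]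
  have hpt : ∀ x ∈ Km m, Δ.indicator (1 : EuclideanSpace ℝ (Fin n) → ℝ≥0∞) x
      ≤ 2 * D (χ i x) (l x) := by
    intro x _
    by_cases hxΔ : x ∈ Δ
    · rw [Set.indicator_of_mem hxΔ, Pi.one_apply]
      have hhl : (1:ℝ≥0∞)/2 ≤ D (χ i x) (l x) := by
        rcases Set.mem_symmDiff.mp hxΔ with ⟨hxe, hxE⟩ | ⟨hxE, hxe⟩
        · have hχx : χ i x = 1 := by
            simp [hχdef, Set.indicator_of_mem hxe]
          have hlx : l x ≤ 1/2 := by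
            have h' : ¬ ((1:ℝ≥0∞)/2 < l x) := by simpa [hEdef] using hxE
            exact not_lt.mp h'
          rw [hχx, D_one_left (hl1 x), ← hhalf]
          exact tsub_le_tsub_left hlx 1
        · have hχx : χ i x = 0 := by
            simp [hχdef, Set.indicator_of_notMem hxe]
          have hlx : (1:ℝ≥0∞)/2 < l x := by
            simpa [hEdef] using hxE
          rw [hχx, D_zero_left]
          exact hlx.le
      calc (1:ℝ≥0∞) = 2 * (1/2) := htwohalf.symm
        _ ≤ 2 * D (χ i x) (l x) := mul_le_mul_right hhl _
    · rw [Set.indicator_of_notMem hxΔ]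
      exact zero_le
  have hvol : volume (Δ ∩ Km m) ≤ 2 * ∫⁻ x in Km m, D (χ i x) (l x) := by
    have h1 : volume (Δ ∩ Km m) = ∫⁻ x in Km m, Δ.indicator 1 x := by
      rw [lintegral_indicator hΔmeas]
      simp only [Pi.one_apply]
      rw [setLIntegral_one, Measure.restrict_apply hΔmeas]
    rw [h1]
    calc ∫⁻ x in Km m, Δ.indicator 1 x ≤ ∫⁻ x in Km m, 2 * D (χ i x) (l x) :=
        setLIntegral_mono (measurable_const.mul (measurable_D (measχ i) measl)) hpt
      _ = 2 * ∫⁻ x in Km m, D (χ i x) (l x) := lintegral_const_mul' _ _ ENNReal.ofNat_ne_top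
  have htri : ∫⁻ x in Km m, D (χ i x) (l x) ≤
      (∫⁻ x in Km m, D (χ i x) (F i k x)) + (∫⁻ x in Km m, D (F i k x) (G k x)) +
        ∫⁻ x in Km m, D (G k x) (l x) := by
    calc ∫⁻ x in Km m, D (χ i x) (l x)
        ≤ ∫⁻ x in Km m, (D (χ i x) (F i k x) + (D (F i k x) (G k x) + D (G k x) (l x))) :=
          lintegral_mono fun x =>
            (D_triangle _ (F i k x) _).trans (add_le_add_right (D_triangle _ (G k x) _) _)
      _ = _ := by
          rw [lintegral_add_left (measurable_D (measχ i) (measF i k)),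
            lintegral_add_left (measurable_D (measF i k) (measG k)), add_assoc]
  calc volume (((Eh (φ i) ∩ Ω) ∆ (E ∩ Ω)) ∩ K)
      ≤ volume ((Δ ∩ Km m) ∪ ((Ω ∩ closure K) \ Km m)) := measure_mono hset
    _ ≤ volume (Δ ∩ Km m) + volume ((Ω ∩ closure K) \ Km m) := measure_union_le _ _
    _ ≤ 2 * (∫⁻ x in Km m, D (χ i x) (l x)) + ε / 2 := add_le_add hvol hm.le
    _ ≤ (2 * (∫⁻ x in Km m, D (χ i x) (F i k x)) + 2 * (∫⁻ x in Km m, D (F i k x) (G k x)) +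
          2 * (∫⁻ x in Km m, D (G k x) (l x))) + ε / 2 := by
        refine add_le_add_left ?_ _
        calc 2 * (∫⁻ x in Km m, D (χ i x) (l x))
            ≤ 2 * ((∫⁻ x in Km m, D (χ i x) (F i k x)) + (∫⁻ x in Km m, D (F i k x) (G k x)) +
                ∫⁻ x in Km m, D (G k x) (l x)) := mul_le_mul_right htri _
          _ = _ := by ring
    _ ≤ (η + η + η) + ε / 2 := by
        refine add_le_add_left (add_le_add (add_le_add ?_ hi2.le) hk3.le) _
        refine le_trans ?_ hk2.le
        exact mul_le_mul_right ((hT1 m i k hk1).trans (mul_le_mul_right hi1 _)) 2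
    _ ≤ ε / 2 + ε / 2 := by
        refine add_le_add_left ?_ _
        calc η + η + η ≤ (η + η) + (η + η) := add_le_add le_rfl le_self_add
          _ = ε / 2 / 2 + ε / 2 / 2 := by rw [hηdef, ENNReal.add_halves]
          _ = ε / 2 := ENNReal.add_halves _
    _ = ε := ENNReal.add_halves ε
end
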